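/- arXiv:1506.02172 — 11 statements merged into one kernel-verified Lean document; each statement's English description precedes it below -/
import Mathlib

section
/- Let D be a principal ideal domain, let d ∈ D be neither zero nor a unit, and let A be an n×n matrix over D. If f ∈ D[X] is a (d)-minimal polynomial of A, then every polynomial g in the (d)-ideal N_{(d)}(A) with deg(g) < deg(f) has leading coefficient lc(g) that is not invertible modulo d, i.e. gcd(lc(g), d) ≠ 1. -/
/-- `f(A) ∈ d·M_n(D)`, i.e. `f` belongs to the `(d)`-ideal `N_{(d)}(A)` of the matrix `A`. -/
def memNullDvd {D : Type*} [CommRing D] {n : ℕ} (A : Matrix (Fin n) (Fin n) D) (d : D)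
    (f : Polynomial D) : Prop :=
  ∃ B : Matrix (Fin n) (Fin n) D, Polynomial.aeval A f = d • B

/-- `f` is a `(d)`-minimal polynomial of `A`: a monic polynomial in `N_{(d)}(A)` of minimal
degree among monic polynomials in `N_{(d)}(A)`. -/
def IsMinPolyMod {D : Type*} [CommRing D] {n : ℕ} (A : Matrix (Fin n) (Fin n) D) (d : D)
    (f : Polynomial D) : Prop :=
  f.Monic ∧ memNullDvd A d f ∧
    ∀ g : Polynomial D, g.Monic → memNullDvd A d g → f.degree ≤ g.degree

/-- If `d` is neither zero nor a unit and `f` is a `(d)`-minimal polynomial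
of `A`, then every `g ∈ N_{(d)}(A)` with `deg g < deg f` has leading coefficient that is not
invertible modulo `d`, i.e. `gcd(lc g, d) ≠ 1`. -/
theorem stmt0 {D : Type*} [CommRing D] [IsDomain D] [IsPrincipalIdealRing D]
    {n : ℕ} (A : Matrix (Fin n) (Fin n) D) (d : D) (hd0 : d ≠ 0) (hdu : ¬ IsUnit d)
    (f : Polynomial D) (hf : IsMinPolyMod A d f)
    (g : Polynomial D) (hg : memNullDvd A d g) (hdeg : g.degree < f.degree) :
    ¬ IsCoprime g.leadingCoeff d := by
  rintro ⟨u, v, huv⟩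
  by_cases hg0 : g = 0
  · subst hg0
    simp only [Polynomial.leadingCoeff_zero, mul_zero, zero_add] at huv
    exact hdu (IsUnit.of_mul_eq_one (a := d) v (by rw [mul_comm]; exact huv))
  obtain ⟨B, hB⟩ := hg
  set k := g.natDegree with hk
  set h : Polynomial D := Polynomial.C u * g + Polynomial.C (v * d) * Polynomial.X ^ k with hh
  have hcoeff : h.coeff k = 1 := by
    have : g.coeff k = g.leadingCoeff := rfl
    have h2 : (Polynomial.C (v*d) * Polynomial.X ^ k).coeff k = v * d := by
      rw [Polynomial.coeff_C_mul, Polynomial.coeff_X_pow]; simp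
    rw [hh, Polynomial.coeff_add, Polynomial.coeff_C_mul, h2, this, huv]
  have hdegh : h.natDegree ≤ k := by
    apply Polynomial.natDegree_add_le_of_degree_le
    · exact (Polynomial.natDegree_C_mul_le _ _).trans le_rfl
    · exact (Polynomial.natDegree_C_mul_le _ _).trans (by simp)
  have hmonic : h.Monic := Polynomial.monic_of_natDegree_le_of_coeff_eq_one k hdegh hcoeff
  have hmem : memNullDvd A d h := by
    refine ⟨u • B + v • A ^ k, ?_⟩
    simp only [hh, map_add, map_mul, Polynomial.aeval_C, Polynomial.aeval_X_pow, hB]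
    simp only [← Algebra.smul_def, smul_mul_assoc, smul_smul, smul_add]
    rw [mul_comm u d, mul_comm v d]
  have hle := hf.2.2 h hmonic hmem
  have hdeg' : h.degree ≤ g.degree := by
    have h1 : h.degree ≤ (k : WithBot ℕ) := Polynomial.degree_le_natDegree.trans (by exact_mod_cast Nat.cast_le.mpr hdegh)
    rwa [Polynomial.degree_eq_natDegree hg0]
  exact absurd hle (not_le.mpr (hdeg'.trans_lt hdeg))
end

section
/- Let D be a principal ideal domain, A an n×n matrix over D, and a, b ∈ D coprime elements. Then N_{(ab)}(A) = a·N_{(b)}(A) + b·N_{(a)}(A), i.e. the (ab)-ideal of A equals the sum of a times the (b)-ideal of A and b times the (a)-ideal of A. -/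
/-- For coprime `a, b ∈ D`, one has
`N_{(ab)}(A) = a·N_{(b)}(A) + b·N_{(a)}(A)` (stated elementwise: `f` lies in the `(ab)`-ideal
iff it is of the form `a·g + b·h` with `g ∈ N_{(b)}(A)` and `h ∈ N_{(a)}(A)`). -/
theorem stmt1 {D : Type*} [CommRing D] [IsDomain D] [IsPrincipalIdealRing D]
    {n : ℕ} (A : Matrix (Fin n) (Fin n) D) (a b : D) (hab : IsCoprime a b) :
    ∀ f : Polynomial D, memNullDvd A (a * b) f ↔
      ∃ g h : Polynomial D, memNullDvd A b g ∧ memNullDvd A a h ∧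
        f = Polynomial.C a * g + Polynomial.C b * h := by
  intro f
  constructor
  · rintro ⟨B, hB⟩
    obtain ⟨u, v, huv⟩ := hab
    refine ⟨Polynomial.C u * f, Polynomial.C v * f, ⟨(u * a) • B, ?_⟩, ⟨(v * b) • B, ?_⟩, ?_⟩
    · simp [hB, Algebra.mul_smul_comm, ← Algebra.commutes, ← Algebra.smul_def, smul_smul, mul_comm, mul_left_comm]
    · simp [hB, Algebra.mul_smul_comm, ← Algebra.commutes, ← Algebra.smul_def, smul_smul, mul_comm, mul_left_comm]
    · rw [← mul_assoc, ← mul_assoc, ← Polynomial.C_mul, ← Polynomial.C_mul, ← add_mul,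
        ← Polynomial.C_add]
      rw [show a * u + b * v = 1 by rw [mul_comm a u, mul_comm b v]; exact huv]
      simp
  · rintro ⟨g, h, ⟨G, hG⟩, ⟨H, hH⟩, rfl⟩
    refine ⟨G + H, ?_⟩
    simp [hG, hH, Algebra.mul_smul_comm, ← Algebra.commutes, ← Algebra.smul_def, smul_smul, smul_add, mul_comm,
      mul_left_comm]
end

section
/- Let D be a principal ideal domain, p ∈ D a prime element, ℓ ≥ 1, and A an n×n matrix over D. If f ∈ N_{(p^ℓ)}(A) and f ∉ p^ℓ·D[X], then deg(f) ≥ d_p(A), the p-degree of A. -/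
open Polynomial

/-- Membership in the `(d)`-ideal is equivalent to entrywise divisibility. -/
private lemma memNullDvd_iff_dvd {D : Type*} [CommRing D] {n : ℕ}
    (A : Matrix (Fin n) (Fin n) D) (d : D) (f : Polynomial D) :
    (∃ B : Matrix (Fin n) (Fin n) D, Polynomial.aeval A f = d • B) ↔
      ∀ i j, d ∣ (Polynomial.aeval A f) i j := by
  constructor
  · rintro ⟨B, hB⟩ i j
    exact ⟨B i j, by rw [hB]; rfl⟩
  · intro h
    refine ⟨Matrix.of fun i j => (h i j).choose, ?_⟩
    ext i j
    exact (h i j).choose_spec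

private lemma aeval_map_quot {D F : Type*} [CommRing D] [CommRing F] (φ : D →+* F) {n : ℕ}
    (A : Matrix (Fin n) (Fin n) D) (q : Polynomial D) :
    Polynomial.aeval (A.map φ) (q.map φ) = (Polynomial.aeval A q).map φ := by
  have h1 : (Polynomial.aeval A q).map φ = φ.mapMatrix (Polynomial.aeval A q) := rfl
  have h2 : A.map φ = φ.mapMatrix A := rfl
  rw [h1, h2, Polynomial.aeval_def, Polynomial.aeval_def, Polynomial.hom_eval₂,
    Polynomial.eval₂_map]
  congr 1
  ext x i j
  simp only [RingHom.coe_comp, Function.comp_apply, Matrix.algebraMap_eq_diagonal,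
    RingHom.mapMatrix_apply, Matrix.map_apply]
  rcases eq_or_ne i j with rfl | h
  · simp
  · simp [Matrix.diagonal_apply_ne _ h]

/-- The key descent lemma: from `f(A) ≡ 0 mod p^ℓ` with `f ∉ p^ℓ D[X]` we extract
`g` with `g(A) ≡ 0 mod p`, `g ∉ p D[X]`, `deg g ≤ deg f`. -/
private lemma descent {D : Type*} [CommRing D] [IsDomain D] {p : D} (hp : p ≠ 0) {n : ℕ}
    (A : Matrix (Fin n) (Fin n) D) :
    ∀ ℓ : ℕ, 1 ≤ ℓ → ∀ f : Polynomial D,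
      (∃ B, Polynomial.aeval A f = (p ^ ℓ) • B) →
      (¬ ∃ h : Polynomial D, f = Polynomial.C (p ^ ℓ) * h) →
      ∃ g : Polynomial D, (∃ B, Polynomial.aeval A g = p • B) ∧
        (¬ ∃ h : Polynomial D, g = Polynomial.C p * h) ∧ g.degree ≤ f.degree := by
  intro ℓ hℓ
  induction ℓ, hℓ using Nat.le_induction with
  | base =>
    intro f hf hfp
    exact ⟨f, by simpa using hf, by simpa using hfp, le_rfl⟩
  | succ ℓ hℓ ih =>
    intro f hf hfp
    by_cases hc : ∃ h : Polynomial D, f = Polynomial.C p * h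
    · obtain ⟨h, rfl⟩ := hc
      obtain ⟨B, hB⟩ := hf
      have hcancel : Polynomial.aeval A h = (p ^ ℓ) • B := by
        ext i j
        have : (Polynomial.aeval A (Polynomial.C p * h)) i j = ((p ^ (ℓ + 1)) • B) i j := by
          rw [hB]
        rw [map_mul, Polynomial.aeval_C, ← Algebra.smul_def, Matrix.smul_apply,
          smul_eq_mul, Matrix.smul_apply, smul_eq_mul, pow_succ', mul_assoc] at this
        have h1 := mul_left_cancel₀ hp this
        rw [Matrix.smul_apply, smul_eq_mul]
        exact h1
      have hhp : ¬ ∃ h' : Polynomial D, h = Polynomial.C (p ^ ℓ) * h' := by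
        rintro ⟨h', rfl⟩
        exact hfp ⟨h', by rw [pow_succ]; ring_nf; rw [map_mul]; ring⟩
      obtain ⟨g, hg1, hg2, hg3⟩ := ih h ⟨B, hcancel⟩ hhp
      refine ⟨g, hg1, hg2, hg3.trans ?_⟩
      by_cases hh0 : h = 0
      · exact absurd ⟨0, by simp [hh0]⟩ hfp
      · rw [Polynomial.degree_mul, Polynomial.degree_C hp, zero_add]
    · obtain ⟨B, hB⟩ := hf
      refine ⟨f, ⟨(p ^ ℓ) • B, ?_⟩, hc, le_rfl⟩
      rw [hB, smul_smul, pow_succ']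

/-- If `p` is prime, `ℓ ≥ 1`, `f ∈ N_{(p^ℓ)}(A)` and `f ∉ p^ℓ·D[X]`, then
`deg f ≥ d_p(A)`, where the `p`-degree `d_p(A)` is the degree of a `(p)`-minimal polynomial
`ν₁` of `A`. -/
theorem stmt2 {D : Type*} [CommRing D] [IsDomain D] [IsPrincipalIdealRing D]
    (p : D) (hp : Prime p) (ℓ : ℕ) (hℓ : 1 ≤ ℓ)
    {n : ℕ} (A : Matrix (Fin n) (Fin n) D)
    (ν₁ : Polynomial D) (hν₁ : IsMinPolyMod A p ν₁)
    (f : Polynomial D) (hf : memNullDvd A (p ^ ℓ) f)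
    (hfp : ¬ ∃ h : Polynomial D, f = Polynomial.C (p ^ ℓ) * h) :
    ν₁.degree ≤ f.degree := by
  have hp0 : p ≠ 0 := hp.ne_zero
  obtain ⟨g, hg1, hg2, hg3⟩ := descent hp0 A ℓ hℓ f hf hfp
  set I : Ideal D := Ideal.span {p} with hI
  haveI : I.IsMaximal := PrincipalIdealRing.isMaximal_of_irreducible hp.irreducible
  letI : Field (D ⧸ I) := Ideal.Quotient.field I
  set φ : D →+* D ⧸ I := Ideal.Quotient.mk I with hφ
  have hmem : ∀ q : Polynomial D,
      (∃ B, Polynomial.aeval A q = p • B) ↔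
        Polynomial.aeval (A.map φ) (q.map φ) = 0 := by
    intro q
    rw [memNullDvd_iff_dvd, aeval_map_quot]
    constructor
    · intro h
      ext i j
      have := h i j
      rw [← Ideal.mem_span_singleton, ← hI] at this
      simpa [Matrix.map_apply] using Ideal.Quotient.eq_zero_iff_mem.2 this
    · intro h i j
      rw [← Ideal.mem_span_singleton, ← hI, ← Ideal.Quotient.eq_zero_iff_mem]
      have h2 : ((Polynomial.aeval A q).map φ) i j = 0 := by rw [h]; rfl
      simpa [Matrix.map_apply] using h2
  have hgmap : g.map φ ≠ 0 := by
    intro h0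
    apply hg2
    have hco : ∀ i, p ∣ g.coeff i := by
      intro i
      have := Polynomial.ext_iff.1 h0 i
      rw [Polynomial.coeff_map, Polynomial.coeff_zero] at this
      exact Ideal.mem_span_singleton.1 (Ideal.Quotient.eq_zero_iff_mem.1 this)
    obtain ⟨h, hh⟩ := (Polynomial.C_dvd_iff_dvd_coeff p g).2 hco
    exact ⟨h, hh⟩
  have hzero : Polynomial.aeval (A.map φ) (g.map φ) = 0 := (hmem g).1 hg1
  have hdvd := minpoly.dvd (D ⧸ I) (A.map φ) hzero
  have hmpdeg : (minpoly (D ⧸ I) (A.map φ)).degree ≤ (g.map φ).degree :=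
    Polynomial.degree_le_of_dvd hdvd hgmap
  have hint : IsIntegral (D ⧸ I) (A.map φ) := IsIntegral.of_finite _ _
  have hmon := minpoly.monic hint
  have hlift : minpoly (D ⧸ I) (A.map φ) ∈ Polynomial.lifts φ :=
    (Polynomial.mem_lifts _).2
      (Polynomial.map_surjective φ Ideal.Quotient.mk_surjective _)
  obtain ⟨m, hm1, hm2, hm3⟩ := Polynomial.lifts_and_degree_eq_and_monic hlift hmon
  have hmA : memNullDvd A p m := (hmem m).2 (by rw [hm1]; exact minpoly.aeval _ _)
  calc ν₁.degree ≤ m.degree := hν₁.2.2 m hm3 hmA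
    _ = (minpoly (D ⧸ I) (A.map φ)).degree := hm2
    _ ≤ (g.map φ).degree := hmpdeg
    _ ≤ g.degree := Polynomial.degree_map_le
    _ ≤ f.degree := hg3
end

section
/- Let D be a principal ideal domain, p ∈ D a prime element, A an n×n matrix over D, ℓ ≥ 1, and ν_ℓ a (p^ℓ)-minimal polynomial of A. If f ∈ N_{(p^ℓ)}(A), then there exist uniquely determined polynomials q, g ∈ D[X] with deg(g) < deg(ν_ℓ) such that f = q·ν_ℓ + p·g. Consequently, N_{(p^ℓ)}(A) = ν_ℓ·D[X] + p·N_{(p^{ℓ-1})}(A). -/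
open Polynomial

section Helpers

variable {D : Type*} [CommRing D] {n : ℕ} (A : Matrix (Fin n) (Fin n) D)

theorem memNullDvd_iff {d : D} {f : Polynomial D} :
    memNullDvd A d f ↔ ∀ i j, d ∣ (Polynomial.aeval A f) i j := by
  constructor
  · rintro ⟨B, hB⟩ i j
    exact ⟨B i j, by rw [hB]; simp [Matrix.smul_apply, smul_eq_mul]⟩
  · intro h
    refine ⟨Matrix.of fun i j => (h i j).choose, ?_⟩
    ext i j
    simpa [Matrix.smul_apply, smul_eq_mul] using (h i j).choose_spec

theorem memNullDvd_add {d : D} {f g : Polynomial D} (hf : memNullDvd A d f)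
    (hg : memNullDvd A d g) : memNullDvd A d (f + g) := by
  rw [memNullDvd_iff] at *
  intro i j
  rw [map_add, Matrix.add_apply]
  exact dvd_add (hf i j) (hg i j)

theorem memNullDvd_sub {d : D} {f g : Polynomial D} (hf : memNullDvd A d f)
    (hg : memNullDvd A d g) : memNullDvd A d (f - g) := by
  rw [memNullDvd_iff] at *
  intro i j
  rw [map_sub, Matrix.sub_apply]
  exact dvd_sub (hf i j) (hg i j)

theorem memNullDvd_mul_left {d : D} (g : Polynomial D) {f : Polynomial D}
    (hf : memNullDvd A d f) : memNullDvd A d (g * f) := by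
  rw [memNullDvd_iff] at *
  intro i j
  rw [map_mul, Matrix.mul_apply]
  exact Finset.dvd_sum fun k _ => (hf k j).mul_left _

theorem memNullDvd_mono {d e : D} (hde : e ∣ d) {f : Polynomial D}
    (hf : memNullDvd A d f) : memNullDvd A e f := by
  rw [memNullDvd_iff] at *
  exact fun i j => dvd_trans hde (hf i j)

theorem memNullDvd_C_mul {d e : D} {f : Polynomial D} (hf : memNullDvd A d f) :
    memNullDvd A (e * d) (Polynomial.C e * f) := by
  obtain ⟨B, hB⟩ := hf
  refine ⟨B, ?_⟩
  rw [map_mul, aeval_C, ← Algebra.smul_def, hB, smul_smul]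

theorem memNullDvd_C_mul_self {d : D} (f : Polynomial D) :
    memNullDvd A d (Polynomial.C d * f) := by
  refine ⟨Polynomial.aeval A f, ?_⟩
  rw [map_mul, aeval_C, ← Algebra.smul_def]

theorem exists_isMinPolyMod [Nontrivial D] (d : D) : ∃ ν, IsMinPolyMod A d ν := by
  classical
  have hex : ∃ k : ℕ, ∃ g : Polynomial D, g.Monic ∧ memNullDvd A d g ∧ g.natDegree = k :=
    ⟨(Matrix.charpoly A).natDegree, A.charpoly, A.charpoly_monic,
      ⟨0, by simp [Matrix.aeval_self_charpoly]⟩, rfl⟩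
  obtain ⟨g, hg1, hg2, hg3⟩ := Nat.find_spec hex
  refine ⟨g, hg1, hg2, ?_⟩
  intro h hm hmem
  rw [degree_eq_natDegree hg1.ne_zero, degree_eq_natDegree hm.ne_zero]
  exact_mod_cast hg3 ▸ Nat.find_min' hex ⟨h, hm, hmem, rfl⟩

theorem degree_C_mul_le' {D : Type*} [CommRing D] (c : D) (r : Polynomial D) :
    (Polynomial.C c * r).degree ≤ r.degree := by
  calc (Polynomial.C c * r).degree ≤ (Polynomial.C c).degree + r.degree :=
        Polynomial.degree_mul_le _ _
    _ ≤ 0 + r.degree := add_le_add_left Polynomial.degree_C_le _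
    _ = r.degree := zero_add _

end Helpers

theorem key_dvd {D : Type*} [CommRing D] [IsDomain D] [IsPrincipalIdealRing D]
    (p : D) (hp : Prime p) {n : ℕ} (A : Matrix (Fin n) (Fin n) D) :
    ∀ ℓ : ℕ, ∀ ν : Polynomial D, IsMinPolyMod A (p ^ ℓ) ν →
      ∀ f : Polynomial D, memNullDvd A (p ^ ℓ) f → f.degree < ν.degree →
      ∃ g, f = Polynomial.C p * g := by
  intro ℓ
  induction ℓ with
  | zero =>
    intro ν hν f hf hdeg
    have h1 : memNullDvd A (p ^ 0) 1 := ⟨Polynomial.aeval A (1 : Polynomial D), by simp⟩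
    have hle := hν.2.2 1 monic_one h1
    rw [degree_one] at hle
    have hlt : f.degree < 0 := lt_of_lt_of_le hdeg hle
    have hf0 : f = 0 := by
      rw [← Polynomial.degree_eq_bot]
      exact Nat.WithBot.lt_zero_iff.mp hlt
    exact ⟨0, by simp [hf0]⟩
  | succ ℓ ih =>
    classical
    intro ν hν f hf hdeg
    obtain ⟨ν', hν'⟩ := exists_isMinPolyMod A (p ^ ℓ)
    have hmono : ∀ h : Polynomial D, memNullDvd A (p ^ (ℓ + 1)) h → memNullDvd A (p ^ ℓ) h :=
      fun h => memNullDvd_mono A (pow_dvd_pow p (Nat.le_succ ℓ))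
    have hν'ν : ν'.degree ≤ ν.degree := hν'.2.2 ν hν.1 (hmono ν hν.2.1)
    set q := f /ₘ ν' with hqdef
    set r := f %ₘ ν' with hrdef
    have hfqr : r + ν' * q = f := modByMonic_add_div f ν'
    have hrdeg : r.degree < ν'.degree := degree_modByMonic_lt f hν'.1
    have hqν'mem : memNullDvd A (p ^ ℓ) (ν' * q) := by
      rw [mul_comm]; exact memNullDvd_mul_left A q hν'.2.1
    have hrmem : memNullDvd A (p ^ ℓ) r := by
      have hr' : r = f - ν' * q := by rw [← hfqr]; ring
      rw [hr']
      exact memNullDvd_sub A (hmono f hf) hqν'mem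
    obtain ⟨g, hg⟩ := ih ν' hν' r hrmem hrdeg
    -- show C p ∣ q
    have hq_dvd : Polynomial.C p ∣ q := by
      by_contra hndvd
      rw [Polynomial.C_dvd_iff_dvd_coeff] at hndvd
      push_neg at hndvd
      have hq0 : q ≠ 0 := by
        intro h0
        obtain ⟨i, hi⟩ := hndvd
        rw [h0] at hi
        simp at hi
      set S := q.support.filter (fun i => ¬ p ∣ q.coeff i) with hSdef
      have hSne : S.Nonempty := by
        obtain ⟨i, hi⟩ := hndvd
        exact ⟨i, Finset.mem_filter.mpr
          ⟨Polynomial.mem_support_iff.mpr (fun h0 => hi (h0 ▸ dvd_zero p)), hi⟩⟩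
      set j := S.max' hSne with hjdef
      have hjmem : j ∈ S := S.max'_mem hSne
      have hjb : ¬ p ∣ q.coeff j := (Finset.mem_filter.mp hjmem).2
      have hjmax : ∀ k, j < k → p ∣ q.coeff k := by
        intro k hk
        by_contra hkd
        have hkS : k ∈ S := Finset.mem_filter.mpr
          ⟨Polynomial.mem_support_iff.mpr (fun h0 => hkd (h0 ▸ dvd_zero p)), hkd⟩
        exact absurd (S.le_max' k hkS) (not_le.mpr hk)
      have hjq : j ≤ q.natDegree :=
        le_natDegree_of_mem_supp j (Finset.mem_filter.mp hjmem).1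
      -- low part u of q
      set u := q %ₘ (X ^ (j + 1) : Polynomial D) with hudef
      have hXm : (X ^ (j + 1) : Polynomial D).Monic := monic_X_pow _
      have huq : u + X ^ (j + 1) * (q /ₘ X ^ (j + 1)) = q := modByMonic_add_div q _
      have hudeg : u.degree < ((j + 1 : ℕ) : WithBot ℕ) := by
        have h := degree_modByMonic_lt q hXm
        rwa [degree_X_pow] at h
      have hucoeff_le : ∀ k, k ≤ j → u.coeff k = q.coeff k := by
        intro k hk
        have h0 : (X ^ (j + 1) * (q /ₘ X ^ (j + 1))).coeff k = 0 := by
          rw [mul_comm, Polynomial.coeff_mul_X_pow', if_neg (by omega)]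
        conv_rhs => rw [← huq]
        rw [Polynomial.coeff_add, h0, add_zero]
      have hucoeff_gt : ∀ k, j < k → u.coeff k = 0 := by
        intro k hk
        exact Polynomial.coeff_eq_zero_of_degree_lt
          (lt_of_lt_of_le hudeg (by exact_mod_cast hk))
      have hzdvd : Polynomial.C p ∣ q - u := by
        rw [Polynomial.C_dvd_iff_dvd_coeff]
        intro k
        rcases le_or_gt k j with hk | hk
        · rw [Polynomial.coeff_sub, hucoeff_le k hk, sub_self]
          exact dvd_zero p
        · rw [Polynomial.coeff_sub, hucoeff_gt k hk, sub_zero]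
          exact hjmax k hk
      obtain ⟨z, hz⟩ := hzdvd
      have hueq : u = q - Polynomial.C p * z := by rw [← hz]; ring
      -- coprimality
      have hcop : IsCoprime (p ^ (ℓ + 1)) (q.coeff j) :=
        IsCoprime.pow_left (hp.coprime_iff_not_dvd.mpr hjb)
      obtain ⟨a, c, hac⟩ := hcop
      -- the monic polynomial w of degree j
      set w := Polynomial.C c * u + Polynomial.C (a * p ^ (ℓ + 1)) * X ^ j with hwdef
      have hwcoeff : w.coeff j = 1 := by
        rw [hwdef, Polynomial.coeff_add, Polynomial.coeff_C_mul, Polynomial.coeff_C_mul,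
          Polynomial.coeff_X_pow, if_pos rfl, mul_one, hucoeff_le j le_rfl]
        linear_combination hac
      have hwnatdeg : w.natDegree ≤ j := by
        apply le_trans (Polynomial.natDegree_add_le _ _)
        apply max_le
        · apply le_trans (Polynomial.natDegree_C_mul_le _ _)
          rcases eq_or_ne u 0 with h0 | h0
          · simp [h0]
          · rw [← Polynomial.natDegree_lt_iff_degree_lt h0] at hudeg
            omega
        · apply le_trans (Polynomial.natDegree_C_mul_le _ _)
          simp
      have hwmonic : w.Monic := monic_of_natDegree_le_of_coeff_eq_one j hwnatdeg hwcoeff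
      have hwdeg : w.degree = (j : WithBot ℕ) := by
        rw [degree_eq_natDegree hwmonic.ne_zero]
        norm_cast
        refine le_antisymm hwnatdeg ?_
        exact Polynomial.le_natDegree_of_ne_zero (by rw [hwcoeff]; exact one_ne_zero)
      -- the contradiction polynomial m
      set m := w * ν' + Polynomial.C c * r with hmdef
      have hmmonic : m.Monic := by
        apply (hwmonic.mul hν'.1).add_of_left
        calc (Polynomial.C c * r).degree ≤ r.degree := degree_C_mul_le' _ _
          _ < ν'.degree := hrdeg
          _ ≤ w.degree + ν'.degree := by
              rw [hwdeg]
              nth_rewrite 1 [← zero_add ν'.degree]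
              exact add_le_add_left (by exact_mod_cast Nat.zero_le j) _
          _ = (w * ν').degree := (hν'.1.degree_mul).symm
      have hmmem : memNullDvd A (p ^ (ℓ + 1)) m := by
        have hmid : m = Polynomial.C c * f - Polynomial.C c * (Polynomial.C p * (z * ν'))
            + Polynomial.C (p ^ (ℓ + 1)) * (Polynomial.C a * (X ^ j * ν')) := by
          rw [hmdef, hwdef, hueq, ← hfqr]
          simp only [Polynomial.C_mul, Polynomial.C_pow]
          ring
        rw [hmid]
        apply memNullDvd_add
        · apply memNullDvd_sub
          · exact memNullDvd_mul_left A _ hf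
          · apply memNullDvd_mul_left
            have h1 : memNullDvd A (p ^ ℓ) (z * ν') := memNullDvd_mul_left A z hν'.2.1
            have h2 : memNullDvd A (p * p ^ ℓ) (Polynomial.C p * (z * ν')) :=
              memNullDvd_C_mul A h1
            rwa [← pow_succ'] at h2
        · exact memNullDvd_C_mul_self A _
      have hcontra := hν.2.2 m hmmonic hmmem
      -- degree m < degree ν
      have hmdeg : m.degree < ν.degree := by
        have h1 : m.degree = w.degree + ν'.degree := by
          rw [hmdef, Polynomial.degree_add_eq_left_of_degree_lt, hν'.1.degree_mul]
          · rw [hν'.1.degree_mul]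
            calc (Polynomial.C c * r).degree ≤ r.degree := degree_C_mul_le' _ _
              _ < ν'.degree := hrdeg
              _ ≤ w.degree + ν'.degree := by
                  rw [hwdeg]
                  nth_rewrite 1 [← zero_add ν'.degree]
                  exact add_le_add_left (by exact_mod_cast Nat.zero_le j) _
        have h2 : w.degree + ν'.degree ≤ q.degree + ν'.degree := by
          apply add_le_add_left
          rw [hwdeg, degree_eq_natDegree hq0]
          exact_mod_cast hjq
        have h3 : q.degree + ν'.degree = (q * ν').degree := (hν'.1.degree_mul).symm
        have h4 : (q * ν').degree < ν.degree := by
          have : q * ν' = f - r := by rw [← hfqr]; ring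
          rw [this]
          apply lt_of_le_of_lt (Polynomial.degree_sub_le f r)
          exact max_lt hdeg (lt_of_lt_of_le hrdeg hν'ν)
        rw [h1]
        exact lt_of_le_of_lt (h2.trans_eq h3) h4
      exact absurd hcontra (not_le.mpr hmdeg)
    obtain ⟨z₀, hz₀⟩ := hq_dvd
    refine ⟨ν' * z₀ + g, ?_⟩
    rw [← hfqr, hz₀, hg]
    ring

/-- Let `p` be prime, `ℓ ≥ 1` and `ν_ℓ` a `(p^ℓ)`-minimal polynomial of `A`.
Every `f ∈ N_{(p^ℓ)}(A)` can be written uniquely as `f = q·ν_ℓ + p·g` with `deg g < deg ν_ℓ`;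
consequently `N_{(p^ℓ)}(A) = ν_ℓ·D[X] + p·N_{(p^{ℓ-1})}(A)`. -/
theorem stmt3 {D : Type*} [CommRing D] [IsDomain D] [IsPrincipalIdealRing D]
    (p : D) (hp : Prime p) (ℓ : ℕ) (hℓ : 1 ≤ ℓ)
    {n : ℕ} (A : Matrix (Fin n) (Fin n) D)
    (ν : Polynomial D) (hν : IsMinPolyMod A (p ^ ℓ) ν) :
    (∀ f : Polynomial D, memNullDvd A (p ^ ℓ) f →
      ∃! qg : Polynomial D × Polynomial D,
        qg.2.degree < ν.degree ∧ f = qg.1 * ν + Polynomial.C p * qg.2) ∧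
    (∀ f : Polynomial D, memNullDvd A (p ^ ℓ) f ↔
      ∃ q h : Polynomial D, memNullDvd A (p ^ (ℓ - 1)) h ∧
        f = q * ν + Polynomial.C p * h) := by
  have hp0 : p ≠ 0 := hp.ne_zero
  have hCp0 : (Polynomial.C p : Polynomial D) ≠ 0 := by
    simpa using hp0
  have hpow : p * p ^ (ℓ - 1) = p ^ ℓ := by
    rw [← pow_succ']
    congr 1
    omega
  -- existence of decomposition
  have hex : ∀ f : Polynomial D, memNullDvd A (p ^ ℓ) f →
      ∃ q g : Polynomial D, g.degree < ν.degree ∧ f = q * ν + Polynomial.C p * g := by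
    intro f hf
    have hrdeg : (f %ₘ ν).degree < ν.degree := degree_modByMonic_lt f hν.1
    have hfqr : f %ₘ ν + ν * (f /ₘ ν) = f := modByMonic_add_div f ν
    have hrmem : memNullDvd A (p ^ ℓ) (f %ₘ ν) := by
      have hr' : f %ₘ ν = f - ν * (f /ₘ ν) := eq_sub_of_add_eq hfqr
      rw [hr']
      refine memNullDvd_sub A hf ?_
      rw [mul_comm]
      exact memNullDvd_mul_left A _ hν.2.1
    obtain ⟨g, hg⟩ := key_dvd p hp A ℓ ν hν (f %ₘ ν) hrmem hrdeg
    refine ⟨f /ₘ ν, g, ?_, ?_⟩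
    · have : (Polynomial.C p * g).degree = g.degree := by
        rcases eq_or_ne g 0 with h0 | h0
        · simp [h0]
        · rw [Polynomial.degree_C_mul (by exact hp0)]
      rw [← this, ← hg]
      exact hrdeg
    · conv_lhs => rw [← hfqr, hg]
      ring
  -- uniqueness
  have huniq : ∀ q₁ g₁ q₂ g₂ : Polynomial D, g₁.degree < ν.degree → g₂.degree < ν.degree →
      q₁ * ν + Polynomial.C p * g₁ = q₂ * ν + Polynomial.C p * g₂ → q₁ = q₂ ∧ g₁ = g₂ := by
    intro q₁ g₁ q₂ g₂ hg₁ hg₂ heq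
    have hkey : (q₁ - q₂) * ν = Polynomial.C p * (g₂ - g₁) := by
      linear_combination heq
    have hq : q₁ = q₂ := by
      by_contra hne
      have hqν : ν.degree ≤ ((q₁ - q₂) * ν).degree := by
        rw [hν.1.degree_mul]
        nth_rewrite 1 [← zero_add ν.degree]
        exact add_le_add_left (Polynomial.zero_le_degree_iff.mpr (sub_ne_zero.mpr hne)) _
      have hlt : ((q₁ - q₂) * ν).degree < ν.degree := by
        rw [hkey]
        calc (Polynomial.C p * (g₂ - g₁)).degree ≤ (g₂ - g₁).degree :=
              degree_C_mul_le' _ _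
          _ ≤ max g₂.degree g₁.degree := Polynomial.degree_sub_le _ _
          _ < ν.degree := max_lt hg₂ hg₁
      exact absurd hqν (not_le.mpr hlt)
    refine ⟨hq, ?_⟩
    rw [hq] at hkey
    have : Polynomial.C p * (g₂ - g₁) = 0 := by rw [← hkey]; ring
    have h0 : g₂ - g₁ = 0 := by
      rcases mul_eq_zero.mp this with h | h
      · exact absurd h hCp0
      · exact h
    exact (sub_eq_zero.mp h0).symm
  constructor
  · intro f hf
    obtain ⟨q, g, hgdeg, hfeq⟩ := hex f hf
    refine ⟨(q, g), ⟨hgdeg, hfeq⟩, ?_⟩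
    rintro ⟨q₂, g₂⟩ ⟨hg₂deg, hf₂eq⟩
    obtain ⟨hq, hg⟩ := huniq q₂ g₂ q g hg₂deg hgdeg (by rw [← hf₂eq, ← hfeq])
    simp [Prod.ext_iff, hq, hg]
  · intro f
    constructor
    · intro hf
      obtain ⟨q, g, hgdeg, hfeq⟩ := hex f hf
      refine ⟨q, g, ?_, hfeq⟩
      -- g ∈ N_{p^{ℓ-1}}
      rw [memNullDvd_iff]
      intro i j
      have hmem : memNullDvd A (p ^ ℓ) (Polynomial.C p * g) := by
        have : Polynomial.C p * g = f - q * ν := by rw [hfeq]; ring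
        rw [this]
        exact memNullDvd_sub A hf (memNullDvd_mul_left A q hν.2.1)
      rw [memNullDvd_iff] at hmem
      have h1 := hmem i j
      have h2 : (Polynomial.aeval A (Polynomial.C p * g)) i j
          = p * (Polynomial.aeval A g) i j := by
        rw [map_mul, aeval_C, ← Algebra.smul_def, Matrix.smul_apply, smul_eq_mul]
      rw [h2, ← hpow] at h1
      exact (mul_dvd_mul_iff_left hp0).mp h1
    · rintro ⟨q, h, hhmem, hfeq⟩
      rw [hfeq]
      apply memNullDvd_add
      · exact memNullDvd_mul_left A q hν.2.1
      · have := memNullDvd_C_mul A (e := p) hhmem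
        rwa [hpow] at this
end

section
/- Let D be a principal ideal domain, p ∈ D a prime element, A an n×n matrix over D with ℓ-th index set I_A^ℓ (for ℓ ≥ 0), and let ν_i ∈ D[X] be (p^i)-minimal polynomials of A. If f ∈ N_{(p^ℓ)}(A), then f ∈ Σ_{i ∈ I_A^ℓ[f]} p^{ℓ-i}·ν_i·D[X], where I_A^ℓ[f] = {i ∈ I_A^ℓ : deg(ν_i) ≤ deg(f)}. -/
/-- The `ℓ`-th index set of `A` with respect to `p`, computed from a choice `ν` of
`(p^i)`-minimal polynomials: `I_A^ℓ = {ℓ} ∪ {i : 0 ≤ i < ℓ, deg ν_i < deg ν_{i+1}}`. -/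
def indexSet {D : Type*} [CommRing D] (ν : ℕ → Polynomial D) (ℓ : ℕ) : Finset ℕ :=
  insert ℓ ((Finset.range ℓ).filter fun i => (ν i).natDegree < (ν (i + 1)).natDegree)

open Polynomial

namespace Stmt7Aux

variable {D : Type*} [CommRing D] {n : ℕ} {A : Matrix (Fin n) (Fin n) D}

lemma mem_sub {d : D} {f g : Polynomial D} (hf : memNullDvd A d f) (hg : memNullDvd A d g) :
    memNullDvd A d (f - g) := by
  obtain ⟨B, hB⟩ := hf; obtain ⟨C, hC⟩ := hg
  exact ⟨B - C, by rw [map_sub, hB, hC, smul_sub]⟩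

lemma mem_of_pow_le {p : D} {k m : ℕ} (h : k ≤ m) {f : Polynomial D}
    (hf : memNullDvd A (p ^ m) f) : memNullDvd A (p ^ k) f := by
  obtain ⟨B, hB⟩ := hf
  exact ⟨p ^ (m - k) • B, by
    rw [hB, smul_smul, ← pow_add, Nat.add_sub_cancel' h]⟩

lemma mem_C_pow_mul {p : D} {j ℓ : ℕ} (h : j ≤ ℓ) {w : Polynomial D}
    (hw : memNullDvd A (p ^ j) w) (g : Polynomial D) :
    memNullDvd A (p ^ ℓ) (C (p ^ (ℓ - j)) * w * g) := by
  obtain ⟨B, hB⟩ := hw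
  refine ⟨B * Polynomial.aeval A g, ?_⟩
  simp only [map_mul, aeval_C, hB, Algebra.algebraMap_eq_smul_one, smul_mul_assoc, one_mul,
    smul_smul]
  rw [pow_sub_mul_pow p h]

lemma deg_mono {p : D} {i i' : ℕ} (h : i ≤ i') {νi νi' : Polynomial D}
    (hi : IsMinPolyMod A (p ^ i) νi) (hi' : IsMinPolyMod A (p ^ i') νi') :
    νi.degree ≤ νi'.degree :=
  hi.2.2 νi' hi'.1 (mem_of_pow_le h hi'.2.1)

lemma mem_indexSet_le {ν : ℕ → Polynomial D} {ℓ i : ℕ} (hi : i ∈ indexSet ν ℓ) : i ≤ ℓ := by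
  rcases Finset.mem_insert.1 hi with h | h
  · omega
  · exact le_of_lt (Finset.mem_range.1 (Finset.mem_filter.1 h).1)

variable [IsDomain D] [IsPrincipalIdealRing D]

/-- If `g ∈ N_{(p^k)}(A)` and `p ∤ lc g`, then `deg g ≥ deg ν_k`. -/
lemma lemA {p : D} (hp : Prime p) {k : ℕ} {w : Polynomial D}
    (hw : IsMinPolyMod A (p ^ k) w) {g : Polynomial D} (hg : memNullDvd A (p ^ k) g)
    (hg0 : g ≠ 0) (hlc : ¬ p ∣ g.leadingCoeff) : w.degree ≤ g.degree := by
  have hcop : IsCoprime (p ^ k) g.leadingCoeff := ((hp.coprime_iff_not_dvd).2 hlc).pow_left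
  obtain ⟨u, v, huv⟩ := hcop
  set m := g.natDegree with hm
  set h : Polynomial D := C v * g + C (u * p ^ k) * X ^ m with hh
  have hco : h.coeff m = 1 := by
    rw [hh, coeff_add, coeff_C_mul, coeff_C_mul, coeff_X_pow, if_pos rfl, mul_one, hm,
      coeff_natDegree]
    linear_combination huv
  have hdle : h.natDegree ≤ m := by
    refine le_trans (natDegree_add_le _ _) (max_le ?_ ?_)
    · exact natDegree_C_mul_le _ _
    · refine le_trans natDegree_mul_le ?_
      rw [natDegree_C, natDegree_X_pow, zero_add]
  have hmon : h.Monic := monic_of_natDegree_le_of_coeff_eq_one m hdle hco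
  have hmem : memNullDvd A (p ^ k) h := by
    obtain ⟨B, hB⟩ := hg
    refine ⟨v • B + u • A ^ m, ?_⟩
    have hav : Polynomial.aeval A h = v • (p ^ k • B) + (u * p ^ k) • A ^ m := by
      rw [hh, map_add, map_mul, map_mul, aeval_C, aeval_C, map_pow, aeval_X, hB,
        ← Algebra.smul_def, ← Algebra.smul_def]
    rw [hav, smul_smul, smul_add, smul_smul, smul_smul, mul_comm v, mul_comm u]
  have hwh := hw.2.2 h hmon hmem
  have h1 : h.natDegree = m :=
    le_antisymm hdle (le_natDegree_of_ne_zero (by rw [hco]; exact one_ne_zero))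
  calc w.degree ≤ h.degree := hwh
    _ = (m : WithBot ℕ) := by rw [degree_eq_natDegree hmon.ne_zero, h1]
    _ = g.degree := (degree_eq_natDegree hg0).symm

/-- The inner induction: given the leading-coefficient divisibility claim at level `ℓ`,
the decomposition follows by induction on the degree of `f`. -/
lemma core (p : D) (hp : Prime p) (ℓ : ℕ) (ν : ℕ → Polynomial D) (hν0 : ν 0 = 1)
    (hν : ∀ i, i ≤ ℓ → IsMinPolyMod A (p ^ i) (ν i))
    (claim : ∀ f : Polynomial D, ∀ j, j < ℓ → f ≠ 0 → memNullDvd A (p ^ ℓ) f →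
      f.degree < (ν (j + 1)).degree → p ^ (ℓ - j) ∣ f.leadingCoeff) :
    ∀ f, memNullDvd A (p ^ ℓ) f →
      ∃ c : ℕ → Polynomial D,
        f = ∑ i ∈ indexSet ν ℓ, Polynomial.C (p ^ (ℓ - i)) * ν i * c i ∧
        ∀ i ∈ indexSet ν ℓ, ¬ (ν i).degree ≤ f.degree → c i = 0 := by
  suffices H : ∀ d : ℕ, ∀ f : Polynomial D, f.natDegree ≤ d → memNullDvd A (p ^ ℓ) f →
      ∃ c : ℕ → Polynomial D,
        f = ∑ i ∈ indexSet ν ℓ, Polynomial.C (p ^ (ℓ - i)) * ν i * c i ∧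
        ∀ i ∈ indexSet ν ℓ, ¬ (ν i).degree ≤ f.degree → c i = 0 by
    exact fun f hf => H f.natDegree f le_rfl hf
  intro d
  induction d using Nat.strong_induction_on with
  | _ d ih =>
  intro f hfd hf
  by_cases hf0 : f = 0
  · exact ⟨0, by simp [hf0], by simp⟩
  set P : ℕ → Prop := fun i => (ν i).natDegree ≤ f.natDegree with hP
  have hP0 : P 0 := by simp [hP, hν0]
  set j := Nat.findGreatest P ℓ with hj
  have hjℓ : j ≤ ℓ := Nat.findGreatest_le ℓ
  have hPj : (ν j).natDegree ≤ f.natDegree := Nat.findGreatest_spec (Nat.zero_le ℓ) hP0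
  have hνj0 : ν j ≠ 0 := (hν j hjℓ).1.ne_zero
  have hdvd : p ^ (ℓ - j) ∣ f.leadingCoeff := by
    rcases eq_or_lt_of_le hjℓ with h | h
    · rw [h, Nat.sub_self, pow_zero]; exact one_dvd _
    · refine claim f j h hf0 hf ?_
      have hnot : ¬ P (j + 1) :=
        Nat.findGreatest_is_greatest (n := ℓ) (lt_of_eq_of_lt hj.symm (Nat.lt_succ_self j))
          (by omega)
      have hν1 : ν (j + 1) ≠ 0 := (hν _ (by omega)).1.ne_zero
      rw [degree_eq_natDegree hf0, degree_eq_natDegree hν1]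
      have : f.natDegree < (ν (j + 1)).natDegree := by
        simp only [hP, not_le] at hnot; exact hnot
      exact_mod_cast this
  obtain ⟨b, hb⟩ := hdvd
  set e := f.natDegree - (ν j).natDegree with he
  have hee : (ν j).natDegree + e = f.natDegree := by omega
  set s : Polynomial D := C (p ^ (ℓ - j)) * ν j * (C b * X ^ e) with hs
  have hsub : memNullDvd A (p ^ ℓ) s := mem_C_pow_mul hjℓ (hν j hjℓ).2.1 _
  have hs' : s = C (p ^ (ℓ - j) * b) * (X ^ e * ν j) := by rw [hs, C_mul]; ring
  have hb0 : b ≠ 0 := by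
    intro h; exact hf0 (leadingCoeff_eq_zero.1 (by rw [hb, h, mul_zero]))
  have hscoeff : s.coeff f.natDegree = f.leadingCoeff := by
    rw [hs', coeff_C_mul, ← hee, coeff_X_pow_mul, coeff_natDegree,
      (hν j hjℓ).1.leadingCoeff, mul_one, hb]
  have hsdeg : s.degree = f.degree := by
    rw [hs', degree_mul, degree_mul, degree_C (mul_ne_zero (pow_ne_zero _ hp.ne_zero) hb0),
      degree_X_pow, zero_add, degree_eq_natDegree hνj0, degree_eq_natDegree hf0]
    rw [← hee]
    push_cast
    ring
  have hslc : s.leadingCoeff = f.leadingCoeff := by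
    rw [leadingCoeff, natDegree_eq_of_degree_eq hsdeg, hscoeff]
  set f' := f - s with hf'
  have hf'mem : memNullDvd A (p ^ ℓ) f' := mem_sub hf hsub
  have hf'deg : f'.degree < f.degree := degree_sub_lt hsdeg.symm hf0 hslc.symm
  obtain ⟨c', hc'sum, hc'zero⟩ :
      ∃ c : ℕ → Polynomial D,
        f' = ∑ i ∈ indexSet ν ℓ, Polynomial.C (p ^ (ℓ - i)) * ν i * c i ∧
        ∀ i ∈ indexSet ν ℓ, ¬ (ν i).degree ≤ f'.degree → c i = 0 := by
    by_cases h0 : f' = 0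
    · exact ⟨0, by simp [h0], by simp⟩
    · have hlt : f'.natDegree < f.natDegree := natDegree_lt_natDegree h0 hf'deg
      exact ih f'.natDegree (by omega) f' le_rfl hf'mem
  have hjI : j ∈ indexSet ν ℓ := by
    rcases eq_or_lt_of_le hjℓ with h | h
    · rw [h]; exact Finset.mem_insert_self _ _
    · refine Finset.mem_insert_of_mem (Finset.mem_filter.2 ⟨Finset.mem_range.2 h, ?_⟩)
      have hnot : ¬ P (j + 1) :=
        Nat.findGreatest_is_greatest (n := ℓ) (lt_of_eq_of_lt hj.symm (Nat.lt_succ_self j))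
          (by omega)
      simp only [hP, not_le] at hnot
      omega
  refine ⟨fun i => if i = j then c' j + C b * X ^ e else c' i, ?_, ?_⟩
  · have split : ∀ i ∈ indexSet ν ℓ,
        C (p ^ (ℓ - i)) * ν i * (if i = j then c' j + C b * X ^ e else c' i)
          = C (p ^ (ℓ - i)) * ν i * c' i + (if i = j then s else 0) := by
      intro i _
      by_cases hij : i = j
      · subst hij; rw [if_pos rfl, if_pos rfl, hs]; ring
      · simp [hij]
    rw [Finset.sum_congr rfl split, Finset.sum_add_distrib, ← hc'sum,
      Finset.sum_ite_eq' (indexSet ν ℓ) j (fun _ => s), if_pos hjI, hf']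
    ring
  · intro i hi hdeg
    have hij : i ≠ j := by
      intro h; subst h
      exact hdeg (by
        rw [degree_eq_natDegree hνj0, degree_eq_natDegree hf0]
        exact_mod_cast hPj)
    simp only [if_neg hij]
    exact hc'zero i hi (fun hle => hdeg (le_trans hle (le_of_lt hf'deg)))

lemma main (p : D) (hp : Prime p) (ν : ℕ → Polynomial D) (hν0 : ν 0 = 1) :
    ∀ ℓ : ℕ, (∀ i, i ≤ ℓ → IsMinPolyMod A (p ^ i) (ν i)) →
    ∀ f, memNullDvd A (p ^ ℓ) f →
      ∃ c : ℕ → Polynomial D,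
        f = ∑ i ∈ indexSet ν ℓ, Polynomial.C (p ^ (ℓ - i)) * ν i * c i ∧
        ∀ i ∈ indexSet ν ℓ, ¬ (ν i).degree ≤ f.degree → c i = 0 := by
  intro ℓ
  induction ℓ with
  | zero =>
    intro hν f hf
    exact core p hp 0 ν hν0 hν (fun f j hj => absurd hj (Nat.not_lt_zero j)) f hf
  | succ ℓ ihℓ =>
    intro hν
    have hν' : ∀ i, i ≤ ℓ → IsMinPolyMod A (p ^ i) (ν i) :=
      fun i hi => hν i (le_trans hi (Nat.le_succ ℓ))
    refine core p hp (ℓ + 1) ν hν0 hν ?_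
    intro f j hj hf0 hf hdegf
    have hjℓ : j ≤ ℓ := by omega
    obtain ⟨c, hsum, hzero⟩ := ihℓ hν' f (mem_of_pow_le (Nat.le_succ ℓ) hf)
    set g := ∑ i ∈ indexSet ν ℓ, C (p ^ (j - i)) * ν i * c i with hg
    have hci : ∀ i ∈ indexSet ν ℓ,
        C (p ^ (ℓ - i)) * ν i * c i = C (p ^ (ℓ - j)) * (C (p ^ (j - i)) * ν i * c i) := by
      intro i hi
      by_cases hc0 : c i = 0
      · simp [hc0]
      · have hideg : (ν i).degree ≤ f.degree := by
          by_contra hnot; exact hc0 (hzero i hi hnot)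
        have hiℓ : i ≤ ℓ := mem_indexSet_le hi
        have hij : i ≤ j := by
          by_contra hij
          have hmono := deg_mono (show j + 1 ≤ i by omega)
            (hν (j + 1) (by omega)) (hν i (by omega))
          exact absurd (le_trans hmono hideg) (not_le.2 hdegf)
        rw [show ℓ - i = ℓ - j + (j - i) from by omega, pow_add, C_mul]
        ring
    have hfg : f = C (p ^ (ℓ - j)) * g := by
      rw [hg, Finset.mul_sum, hsum]
      exact Finset.sum_congr rfl hci
    have hg0 : g ≠ 0 := fun h => hf0 (by rw [hfg, h, mul_zero])
    have hpow0 : (p : D) ^ (ℓ - j) ≠ 0 := pow_ne_zero _ hp.ne_zero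
    have hgdeg : g.degree = f.degree := by
      rw [hfg, degree_mul, degree_C hpow0, zero_add]
    have hgmem : memNullDvd A (p ^ (j + 1)) g := by
      obtain ⟨B, hB⟩ := hf
      have h1 : (p ^ (ℓ - j)) • Polynomial.aeval A g = (p ^ (ℓ - j)) • ((p ^ (j + 1)) • B) := by
        rw [smul_smul, ← pow_add, show ℓ - j + (j + 1) = ℓ + 1 from by omega, ← hB, hfg,
          map_mul, aeval_C, Algebra.algebraMap_eq_smul_one, smul_mul_assoc, one_mul]
      refine ⟨B, ?_⟩
      ext i k
      have h2 := congrArg (fun M : Matrix (Fin n) (Fin n) D => M i k) h1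
      simp only [Matrix.smul_apply, smul_eq_mul] at h2
      exact mul_left_cancel₀ hpow0 h2
    have hplc : p ∣ g.leadingCoeff := by
      by_contra hnd
      have hle := lemA hp (hν (j + 1) (by omega)) hgmem hg0 hnd
      rw [hgdeg] at hle
      exact absurd (lt_of_le_of_lt hle hdegf) (lt_irrefl _)
    have hlcf : f.leadingCoeff = p ^ (ℓ - j) * g.leadingCoeff := by
      rw [hfg, leadingCoeff_mul, leadingCoeff_C]
    obtain ⟨b, hb⟩ := hplc
    exact ⟨b, by rw [hlcf, hb, show ℓ + 1 - j = (ℓ - j) + 1 from by omega, pow_succ, mul_assoc]⟩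

end Stmt7Aux

/-- Let `p` be prime and `ν_i` `(p^i)`-minimal polynomials of `A` (with
`ν_0 = 1`). If `f ∈ N_{(p^ℓ)}(A)`, then `f ∈ Σ_{i ∈ I_A^ℓ[f]} p^{ℓ-i}·ν_i·D[X]`, where
`I_A^ℓ[f] = {i ∈ I_A^ℓ : deg ν_i ≤ deg f}`: i.e. `f` is a combination of the generators
`p^{ℓ-i}·ν_i` whose coefficients vanish at every index `i` with `deg ν_i > deg f`. -/
theorem stmt7 {D : Type*} [CommRing D] [IsDomain D] [IsPrincipalIdealRing D]
    (p : D) (hp : Prime p) (ℓ : ℕ)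
    {n : ℕ} (A : Matrix (Fin n) (Fin n) D)
    (ν : ℕ → Polynomial D) (hν0 : ν 0 = 1)
    (hν : ∀ i, i ≤ ℓ → IsMinPolyMod A (p ^ i) (ν i))
    (f : Polynomial D) (hf : memNullDvd A (p ^ ℓ) f) :
    ∃ c : ℕ → Polynomial D,
      f = ∑ i ∈ indexSet ν ℓ, Polynomial.C (p ^ (ℓ - i)) * ν i * c i ∧
      ∀ i ∈ indexSet ν ℓ, ¬ (ν i).degree ≤ f.degree → c i = 0 :=
  Stmt7Aux.main p hp ν hν0 ℓ hν f hf
end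

section
/- Let D be a principal ideal domain with quotient field K, p ∈ D a prime element, and A an n×n matrix over D with minimal polynomial μ_A over K; then μ_A has coefficients in D, and if ν_i are (p^i)-minimal polynomials of A for i ≥ 0, there exists m ∈ ℕ such that deg(ν_ℓ) = deg(μ_A) for all ℓ ≥ m. -/
open Polynomial Matrix

/-- Let `D` be a PID with quotient field `K`, `p ∈ D` prime, and `A` a square
matrix over `D` with minimal polynomial `μ_A` over `K`. Then `μ_A` has coefficients in `D`
(i.e. is the image of some `μ ∈ D[X]`), and if `ν_i` are `(p^i)`-minimal polynomials of `A`
for `i ≥ 0`, there is `m ∈ ℕ` with `deg ν_ℓ = deg μ_A` for all `ℓ ≥ m`. -/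
theorem stmt8 {D : Type*} [CommRing D] [IsDomain D] [IsPrincipalIdealRing D]
    (K : Type*) [Field K] [Algebra D K] [IsFractionRing D K]
    (p : D) (hp : Prime p)
    {n : ℕ} (A : Matrix (Fin n) (Fin n) D)
    (ν : ℕ → Polynomial D) (hν : ∀ i, IsMinPolyMod A (p ^ i) (ν i)) :
    ∃ μ : Polynomial D,
      μ.map (algebraMap D K) = minpoly K (A.map (algebraMap D K)) ∧
      ∃ m : ℕ, ∀ ℓ, m ≤ ℓ → (ν ℓ).natDegree = μ.natDegree := by
  classical
  have hinj : Function.Injective (algebraMap D K) := IsFractionRing.injective D K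
  set A' : Matrix (Fin n) (Fin n) K := A.map (algebraMap D K) with hA'def
  let φ : Matrix (Fin n) (Fin n) D →ₐ[D] Matrix (Fin n) (Fin n) K :=
    AlgHom.mapMatrix (Algebra.ofId D K)
  have hφ : ∀ B : Matrix (Fin n) (Fin n) D, φ B = B.map (algebraMap D K) := fun B => rfl
  have hA'int : IsIntegral K A' :=
    ⟨A'.charpoly, A'.charpoly_monic, A'.aeval_self_charpoly⟩
  have hμKmonic : (minpoly K A').Monic := minpoly.monic hA'int
  have hdvd : minpoly K A' ∣ A.charpoly.map (algebraMap D K) := by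
    apply minpoly.dvd
    rw [← Matrix.charpoly_map]
    exact Matrix.aeval_self_charpoly _
  obtain ⟨μ, hμ⟩ := IsIntegrallyClosed.eq_map_mul_C_of_dvd (K := K) A.charpoly_monic hdvd
  rw [hμKmonic.leadingCoeff, Polynomial.C_1, mul_one] at hμ
  have hμmonic : μ.Monic := by
    apply Polynomial.monic_of_injective hinj
    rw [hμ]; exact hμKmonic
  have hdeg : μ.natDegree = (minpoly K A').natDegree := by
    rw [← hμ, hμmonic.natDegree_map]
  have hμ0 : Polynomial.aeval A μ = 0 := by
    apply Matrix.map_injective hinj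
    show (Polynomial.aeval A μ).map (algebraMap D K) = (0 : Matrix (Fin n) (Fin n) D).map _
    have h0 : (0 : Matrix (Fin n) (Fin n) D).map (algebraMap D K) = 0 := by
      ext i j; simp
    rw [h0, ← hφ, ← Polynomial.aeval_algHom_apply, hφ, ← hA'def,
      ← Polynomial.aeval_map_algebraMap K, hμ, minpoly.aeval]
  -- the degrees of the ν's are monotone and bounded by `deg μ`
  have hub : ∀ ℓ, (ν ℓ).natDegree ≤ μ.natDegree := fun ℓ =>
    Polynomial.natDegree_le_natDegree
      ((hν ℓ).2.2 μ hμmonic ⟨0, by rw [hμ0, smul_zero]⟩)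
  have hmono : Monotone fun ℓ => (ν ℓ).natDegree := by
    apply monotone_nat_of_le_succ
    intro ℓ
    obtain ⟨B, hB⟩ := (hν (ℓ + 1)).2.1
    refine Polynomial.natDegree_le_natDegree
      ((hν ℓ).2.2 (ν (ℓ + 1)) (hν (ℓ + 1)).1 ⟨p • B, ?_⟩)
    rw [hB, smul_smul, ← pow_succ]
  set f : ℕ → ℕ := fun ℓ => (ν ℓ).natDegree with hfdef
  have hbdd : BddAbove (Set.range f) := ⟨μ.natDegree, by rintro x ⟨ℓ, rfl⟩; exact hub ℓ⟩
  obtain ⟨m, hm⟩ : ∃ m, f m = sSup (Set.range f) := Nat.sSup_mem (Set.range_nonempty f) hbdd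
  have hmax : ∀ ℓ, f ℓ ≤ f m := fun ℓ => by rw [hm]; exact le_csSup hbdd ⟨ℓ, rfl⟩
  have hstab : ∀ ℓ, m ≤ ℓ → f ℓ = f m := fun ℓ hℓ => le_antisymm (hmax ℓ) (hmono hℓ)
  refine ⟨μ, hμ, m, fun ℓ hℓ => ?_⟩
  show f ℓ = μ.natDegree
  rw [hstab ℓ hℓ]
  set d := f m with hddef
  -- it remains to prove `d = μ.natDegree`; suppose not
  by_contra hne
  have hlt : d + 1 ≤ (minpoly K A').natDegree := by
    rw [← hdeg]; exact Nat.succ_le_of_lt (lt_of_le_of_ne (hub m) hne)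
  -- powers `A'^0, …, A'^d` are linearly independent over `K`
  have li : LinearIndependent K fun i : Fin (minpoly K A').natDegree => A' ^ (i : ℕ) :=
    linearIndependent_pow A'
  have li2 : LinearIndependent K fun i : Fin (d + 1) => A' ^ (i : ℕ) := by
    have := li.comp (Fin.castLE hlt) (Fin.castLE_injective hlt)
    exact this
  set v : Fin (d + 1) → Matrix (Fin n) (Fin n) K := fun i => A' ^ (i : ℕ) with hvdef
  set W := Submodule.span K (Set.range v) with hWdef
  let bW : Module.Basis (Fin (d + 1)) K W := Module.Basis.span li2
  obtain ⟨Λ, hΛ⟩ := LinearMap.exists_extend (bW.coord (Fin.last d))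
  have hΛv : ∀ i : ℕ, ∀ hi : i < d + 1, Λ (A' ^ i) = if i = d then 1 else 0 := by
    intro i hi
    have hmem : v ⟨i, hi⟩ ∈ W := Submodule.subset_span ⟨⟨i, hi⟩, rfl⟩
    have h1 : Λ (v ⟨i, hi⟩) = bW.coord (Fin.last d) ⟨v ⟨i, hi⟩, hmem⟩ :=
      LinearMap.congr_fun hΛ ⟨v ⟨i, hi⟩, hmem⟩
    have h2 : (⟨v ⟨i, hi⟩, hmem⟩ : W) = bW ⟨i, hi⟩ :=
      (Module.Basis.span_apply li2 ⟨i, hi⟩).symm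
    show Λ (v ⟨i, hi⟩) = _
    rw [h1, h2, Module.Basis.coord_apply, bW.repr_self, Finsupp.single_apply]
    simp [Fin.ext_iff, Fin.last]
  -- a common denominator for the values of Λ on standard basis matrices
  obtain ⟨s0, hs0⟩ := IsLocalization.exist_integer_multiples (nonZeroDivisors D) Finset.univ
    (fun ij : Fin n × Fin n => Λ (Matrix.single ij.1 ij.2 (1 : K)))
  have hs0' : ∀ ij : Fin n × Fin n, ∃ t : D,
      algebraMap D K t = (s0 : D) • Λ (Matrix.single ij.1 ij.2 (1 : K)) := by
    intro ij
    obtain ⟨t, ht⟩ := hs0 ij (Finset.mem_univ _)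
    exact ⟨t, ht⟩
  choose T hT using hs0'
  have hint : ∀ B : Matrix (Fin n) (Fin n) D, ∃ t : D,
      algebraMap D K t = (s0 : D) • Λ (B.map (algebraMap D K)) := by
    intro B
    have hrep : B.map (algebraMap D K) =
        ∑ ij : Fin n × Fin n, B ij.1 ij.2 • Matrix.single ij.1 ij.2 (1 : K) := by
      ext i j
      rw [Matrix.map_apply, Matrix.sum_apply]
      have hterm : ∀ c : Fin n × Fin n,
          (B c.1 c.2 • Matrix.single c.1 c.2 (1 : K)) i j
            = if c = (i, j) then algebraMap D K (B i j) else 0 := by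
        intro c
        by_cases h : c = (i, j)
        · subst h
          simp [Matrix.single, Algebra.smul_def]
        · have h' : ¬(c.1 = i ∧ c.2 = j) := by simpa [Prod.ext_iff] using h
          simp [Matrix.single, h', h]
      rw [Finset.sum_congr rfl fun c _ => hterm c, Finset.sum_ite_eq' Finset.univ (i, j)]
      simp
    refine ⟨∑ ij : Fin n × Fin n, B ij.1 ij.2 * T ij, ?_⟩
    rw [hrep, map_sum, map_sum, Finset.smul_sum]
    refine Finset.sum_congr rfl fun ij _ => ?_
    rw [LinearMap.map_smul_of_tower, smul_comm ((s0 : D)) (B ij.1 ij.2), ← hT ij,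
      Algebra.smul_def, _root_.map_mul]
  -- every power of p divides s0
  have hdvdpow : ∀ k : ℕ, p ^ k ∣ (s0 : D) := by
    intro k
    obtain ⟨B, hB⟩ := (hν (m + k)).2.1
    have hdB : (ν (m + k)).natDegree = d := hstab (m + k) (Nat.le_add_right m k)
    have e1 : Polynomial.aeval A' (ν (m + k)) = p ^ (m + k) • B.map (algebraMap D K) := by
      have h := congrArg φ hB
      rw [← Polynomial.aeval_algHom_apply, _root_.map_smul, hφ, hφ] at h
      rw [← hA'def] at h
      exact h
    have e2 : Λ (Polynomial.aeval A' (ν (m + k))) = 1 := by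
      rw [Polynomial.aeval_eq_sum_range, hdB, map_sum]
      have hc : (ν (m + k)).coeff d = 1 := hdB ▸ (hν (m + k)).1.coeff_natDegree
      have hterm : ∀ i ∈ Finset.range (d + 1),
          Λ ((ν (m + k)).coeff i • A' ^ i) = if i = d then 1 else 0 := by
        intro i hi
        rw [LinearMap.map_smul_of_tower, hΛv i (Finset.mem_range.mp hi)]
        by_cases h : i = d
        · rw [if_pos h, h, hc, one_smul]
        · rw [if_neg h, smul_zero]
      rw [Finset.sum_congr rfl hterm]
      simp
    rw [e1, LinearMap.map_smul_of_tower] at e2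
    obtain ⟨t, ht⟩ := hint B
    have key : algebraMap D K (s0 : D) = algebraMap D K (p ^ (m + k) * t) := by
      rw [_root_.map_mul]
      calc algebraMap D K (s0 : D) = (s0 : D) • (1 : K) := by
            rw [Algebra.smul_def, mul_one]
        _ = (s0 : D) • (p ^ (m + k) • Λ (B.map (algebraMap D K))) := by rw [e2]
        _ = p ^ (m + k) • ((s0 : D) • Λ (B.map (algebraMap D K))) := smul_comm _ _ _
        _ = p ^ (m + k) • algebraMap D K t := by rw [ht]
        _ = algebraMap D K (p ^ (m + k)) * algebraMap D K t := by rw [Algebra.smul_def]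
    have hkey : (s0 : D) = p ^ (m + k) * t := hinj key
    exact dvd_trans (pow_dvd_pow p (Nat.le_add_left k m)) ⟨t, hkey⟩
  have hs0ne : (s0 : D) ≠ 0 := nonZeroDivisors.coe_ne_zero s0
  obtain ⟨k, hk⟩ := FiniteMultiplicity.of_prime_left hp hs0ne
  exact hk (hdvdpow (k + 1))
end

section
/- Let D be a principal ideal domain, p ∈ D a prime element, and A an n×n matrix over D with minimal polynomial μ_A ∈ D[X]. Then there exists m ∈ ℕ such that for all k ≥ 0: N_{(p^{m+k})}(A) = μ_A·D[X] + p^k·N_{(p^m)}(A). -/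
open Polynomial Pointwise

private lemma mem_ptsmul {R M' : Type*} [CommSemiring R] [AddCommMonoid M'] [Module R M']
    (a : R) (N : Submodule R M') (x : M') : x ∈ a • N ↔ ∃ y ∈ N, a • y = x := by
  rw [← SetLike.mem_coe, Submodule.coe_pointwise_smul, Set.mem_smul_set]
  simp only [SetLike.mem_coe]

/-- Let `D` be a PID with quotient field `K`, `p ∈ D` prime, and `A` a square
matrix over `D` whose minimal polynomial over `K` is (the image of) `μ_A ∈ D[X]`. Then there
is `m ∈ ℕ` such that for all `k ≥ 0`:
`N_{(p^{m+k})}(A) = μ_A·D[X] + p^k·N_{(p^m)}(A)` (stated elementwise). -/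
theorem stmt9 {D : Type*} [CommRing D] [IsDomain D] [IsPrincipalIdealRing D]
    (K : Type*) [Field K] [Algebra D K] [IsFractionRing D K]
    (p : D) (hp : Prime p)
    {n : ℕ} (A : Matrix (Fin n) (Fin n) D)
    (μ : Polynomial D)
    (hμ : μ.map (algebraMap D K) = minpoly K (A.map (algebraMap D K))) :
    ∃ m : ℕ, ∀ k : ℕ, ∀ f : Polynomial D,
      memNullDvd A (p ^ (m + k)) f ↔
        ∃ g h : Polynomial D, memNullDvd A (p ^ m) h ∧
          f = μ * g + Polynomial.C (p ^ k) * h := by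
  classical
  set φ := algebraMap D K with hφ
  have hinj : Function.Injective φ := IsFractionRing.injective D K
  set ψ : Matrix (Fin n) (Fin n) D →ₐ[D] Matrix (Fin n) (Fin n) K :=
    (Algebra.ofId D K).mapMatrix with hψ
  have hψinj : Function.Injective ψ := Matrix.map_injective hinj
  have hAkint : IsIntegral K (A.map φ) := IsIntegral.of_finite K _
  have hmonic : μ.Monic := by
    have := minpoly.monic hAkint
    rw [← hμ] at this
    exact Polynomial.monic_of_injective hinj this
  have hcomm : ∀ f : Polynomial D,
      ψ (Polynomial.aeval A f) = Polynomial.aeval (A.map φ) f := fun f =>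
    (Polynomial.aeval_algHom_apply ψ A f).symm
  have h0 : Polynomial.aeval A μ = 0 := by
    apply hψinj
    rw [hcomm, map_zero, ← Polynomial.aeval_map_algebraMap K, hμ, minpoly.aeval]
  -- divisibility
  have hdvd : ∀ f : Polynomial D, Polynomial.aeval A f = 0 → μ ∣ f := by
    intro f hf
    rw [← Polynomial.modByMonic_eq_zero_iff_dvd hmonic]
    by_contra hr
    have hrann : Polynomial.aeval (A.map φ) ((f %ₘ μ).map φ) = 0 := by
      rw [hφ, Polynomial.aeval_map_algebraMap K, ← hφ, ← hcomm]
      have : Polynomial.aeval A (f %ₘ μ) = 0 := by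
        have h1 := Polynomial.modByMonic_add_div f μ
        have h2 := congrArg (Polynomial.aeval A) h1
        rw [map_add, map_mul, h0, zero_mul, add_zero] at h2
        rw [h2, hf]
      rw [this, map_zero]
    have hle := minpoly.degree_le_of_ne_zero K (A.map φ)
      ((Polynomial.map_ne_zero_iff hinj).mpr hr) hrann
    rw [← hμ, Polynomial.degree_map_eq_of_injective hinj,
      Polynomial.degree_map_eq_of_injective hinj] at hle
    exact absurd (Polynomial.degree_modByMonic_lt f hmonic) (not_lt.mpr hle)
  -- Artin–Rees
  set S : Submodule D (Matrix (Fin n) (Fin n) D) :=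
    LinearMap.range (Polynomial.aeval A).toLinearMap with hS
  set I : Ideal D := Ideal.span {p} with hI
  obtain ⟨m, hm⟩ :=
    I.exists_pow_inf_eq_pow_smul (M := Matrix (Fin n) (Fin n) D) S
  have hmemt : ∀ (t : ℕ) (x : Matrix (Fin n) (Fin n) D),
      x ∈ I ^ t • (⊤ : Submodule D (Matrix (Fin n) (Fin n) D)) ↔
        ∃ B : Matrix (Fin n) (Fin n) D, x = p ^ t • B := by
    intro t x
    rw [hI, Ideal.span_singleton_pow, Submodule.ideal_span_singleton_smul, mem_ptsmul]
    constructor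
    · rintro ⟨y, -, hy⟩; exact ⟨y, hy.symm⟩
    · rintro ⟨B, rfl⟩; exact ⟨B, trivial, rfl⟩
  refine ⟨m, fun k f => ?_⟩
  constructor
  · rintro ⟨B, hB⟩
    have hx : Polynomial.aeval A f ∈
        I ^ (m + k) • (⊤ : Submodule D (Matrix (Fin n) (Fin n) D)) ⊓ S :=
      ⟨(hmemt _ _).mpr ⟨B, hB⟩, ⟨f, rfl⟩⟩
    rw [hm (m + k) (Nat.le_add_right m k), Nat.add_sub_cancel_left, hI,
      Ideal.span_singleton_pow, Submodule.ideal_span_singleton_smul, ← hI, mem_ptsmul] at hx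
    obtain ⟨y, ⟨hy1, hy2⟩, hyx⟩ := hx
    obtain ⟨h, hh⟩ := hy2
    obtain ⟨B', hB'⟩ := (hmemt m y).mp hy1
    have hh' : Polynomial.aeval A h = y := hh
    have hann : Polynomial.aeval A (f - Polynomial.C (p ^ k) * h) = 0 := by
      rw [map_sub, map_mul, Polynomial.aeval_C, ← Algebra.smul_def, hh', hyx, sub_self]
    obtain ⟨g, hg⟩ := hdvd _ hann
    exact ⟨g, h, ⟨B', by rw [hh', hB']⟩, by rw [← hg]; ring⟩
  · rintro ⟨g, h, ⟨B, hB⟩, rfl⟩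
    refine ⟨B, ?_⟩
    rw [map_add, map_mul, map_mul, h0, zero_mul, Polynomial.aeval_C, ← Algebra.smul_def,
      hB, smul_smul, ← pow_add, zero_add, Nat.add_comm k m]
end

section
/- Let D be a principal ideal domain, p ∈ D a prime element, ℓ ≥ 1, and A = diag(a_1, …, a_n) a diagonal matrix over D with S = {a_1, …, a_n}. Let (b_j)_{j≥0} be a sequence in S such that for every j ≥ 0 and every a ∈ S, v_p((b_j − b_0)···(b_j − b_{j−1})) ≤ v_p((a − b_0)···(a − b_{j−1})), where v_p denotes the p-adic valuation on D. Let k be minimal such that v_p((b_k − b_0)···(b_k − b_{k−1})) ≥ ℓ. Then f_k = (X − b_0)(X − b_1)···(X − b_{k−1}) is a (p^ℓ)-minimal polynomial of A. -/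
open Polynomial

/-- `aeval` of a diagonal matrix is the diagonal matrix of the evaluations. -/
private theorem aeval_diag' {D : Type*} [CommRing D] {n : ℕ} (a : Fin n → D) (f : D[X]) :
    Polynomial.aeval (Matrix.diagonal a) f = Matrix.diagonal (fun i => f.eval (a i)) := by
  have h := Polynomial.aeval_algHom_apply
    (Matrix.diagonalAlgHom (n := Fin n) (α := D) D) a f
  simp only [Matrix.diagonalAlgHom_apply] at h
  rw [h]
  have : (aeval a f : Fin n → D) = fun i => eval (a i) f := by
    funext i; rw [aeval_fn_apply, Polynomial.coe_aeval_eq_eval]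
  rw [this]

/-- Newton expansion: any polynomial of degree ≤ m is a combination of the Newton basis
polynomials `∏_{t<j} (X - b t)`, `j ≤ m`, with top coefficient `g.coeff m`. -/
private theorem newton_expansion {D : Type*} [CommRing D] [IsDomain D] (b : ℕ → D) :
    ∀ (m : ℕ) (g : D[X]), g.degree ≤ (m : ℕ) →
      ∃ c : ℕ → D,
        g = ∑ j ∈ Finset.range (m + 1),
              C (c j) * ∏ t ∈ Finset.range j, (X - C (b t)) ∧
        c m = g.coeff m := by
  intro m
  induction m with
  | zero =>
    intro g hg
    refine ⟨fun _ => g.coeff 0, ?_, rfl⟩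
    rw [Finset.sum_range_one, Finset.range_zero, Finset.prod_empty, mul_one]
    exact Polynomial.eq_C_of_degree_le_zero hg
  | succ m ih =>
    intro g hg
    set F : D[X] := ∏ t ∈ Finset.range (m + 1), (X - C (b t)) with hFdef
    have hFmonic : F.Monic := monic_prod_of_monic _ _ fun t _ => monic_X_sub_C (b t)
    have hFdeg : F.natDegree = m + 1 := by
      rw [hFdef, Polynomial.natDegree_prod _ _ (fun t _ => X_sub_C_ne_zero (b t))]
      simp
    set c' : D := g.coeff (m + 1) with hc'
    set h : D[X] := g - C c' * F with hdef
    have hcoeffF : (C c' * F).coeff (m + 1) = c' := by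
      rw [Polynomial.coeff_C_mul, ← hFdeg, hFmonic.coeff_natDegree, mul_one]
    have hhdeg : h.degree ≤ (m : ℕ) := by
      rw [Polynomial.degree_le_iff_coeff_zero]
      intro i hi
      have hi' : m + 1 < i ∨ i = m + 1 := by
        rcases lt_or_eq_of_le (Nat.succ_le_of_lt (by exact_mod_cast hi)) with h1 | h1
        · exact Or.inl h1
        · exact Or.inr h1.symm
      rcases hi' with h1 | rfl
      · have hg0 : g.coeff i = 0 := by
          apply Polynomial.coeff_eq_zero_of_degree_lt
          exact lt_of_le_of_lt hg (by exact_mod_cast h1)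
        have hF0 : (C c' * F).coeff i = 0 := by
          rw [Polynomial.coeff_C_mul]
          rw [Polynomial.coeff_eq_zero_of_natDegree_lt (by omega), mul_zero]
        simp [hdef, Polynomial.coeff_sub, hg0, hF0]
      · rw [hdef, Polynomial.coeff_sub, hcoeffF, hc', sub_self]
    obtain ⟨c, hc, hctop⟩ := ih h hhdeg
    refine ⟨Function.update c (m + 1) c', ?_, Function.update_self _ _ _⟩
    rw [Finset.sum_range_succ, Function.update_self]
    have hsum : ∑ j ∈ Finset.range (m + 1),
        C (Function.update c (m + 1) c' j) * ∏ t ∈ Finset.range j, (X - C (b t))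
        = ∑ j ∈ Finset.range (m + 1), C (c j) * ∏ t ∈ Finset.range j, (X - C (b t)) := by
      apply Finset.sum_congr rfl
      intro j hj
      rw [Function.update_of_ne (by simp at hj; omega)]
    rw [hsum, ← hc, hdef]
    ring

/-- Let `p ∈ D` be prime, `ℓ ≥ 1`, and `A = diag(a_1, …, a_n)` a diagonal
matrix with set of diagonal entries `S = range a`. Let `(b_j)` be a `p`-ordering of `S`,
i.e. a sequence in `S` such that for all `j` and all `x ∈ S`,
`v_p((b_j − b_0)⋯(b_j − b_{j−1})) ≤ v_p((x − b_0)⋯(x − b_{j−1}))` (expressed via divisibility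
by powers of `p`). If `k` is minimal with `v_p((b_k − b_0)⋯(b_k − b_{k−1})) ≥ ℓ`, then
`f_k = (X − b_0)⋯(X − b_{k−1})` is a `(p^ℓ)`-minimal polynomial of `A`. -/
theorem stmt10 {D : Type*} [CommRing D] [IsDomain D] [IsPrincipalIdealRing D]
    (p : D) (hp : Prime p) (ℓ : ℕ) (hℓ : 1 ≤ ℓ)
    {n : ℕ} (a : Fin n → D)
    (b : ℕ → D) (hbS : ∀ j, b j ∈ Set.range a)
    (hord : ∀ j : ℕ, ∀ x ∈ Set.range a, ∀ m : ℕ,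
      p ^ m ∣ ∏ t ∈ Finset.range j, (b j - b t) →
        p ^ m ∣ ∏ t ∈ Finset.range j, (x - b t))
    (k : ℕ)
    (hk : p ^ ℓ ∣ ∏ t ∈ Finset.range k, (b k - b t))
    (hkmin : ∀ k' < k, ¬ p ^ ℓ ∣ ∏ t ∈ Finset.range k', (b k' - b t)) :
    IsMinPolyMod (Matrix.diagonal a) (p ^ ℓ)
      (∏ t ∈ Finset.range k, (Polynomial.X - Polynomial.C (b t))) := by
  classical
  -- membership criterion
  have hmem : ∀ f : D[X], memNullDvd (Matrix.diagonal a) (p ^ ℓ) f ↔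
      ∀ x ∈ Set.range a, p ^ ℓ ∣ f.eval x := by
    intro f
    constructor
    · rintro ⟨B, hB⟩ x ⟨i, rfl⟩
      rw [aeval_diag'] at hB
      have := congrArg (fun M => M i i) hB
      simp only [Matrix.diagonal_apply_eq, Matrix.smul_apply, smul_eq_mul] at this
      exact ⟨B i i, this⟩
    · intro hdvd
      refine ⟨Matrix.diagonal (fun i => Classical.choose (hdvd (a i) ⟨i, rfl⟩)), ?_⟩
      rw [aeval_diag']
      ext i j
      rcases eq_or_ne i j with rfl | hij
      · simp only [Matrix.diagonal_apply_eq, Matrix.smul_apply, smul_eq_mul]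
        exact Classical.choose_spec (hdvd (a i) ⟨i, rfl⟩)
      · simp [Matrix.diagonal_apply_ne _ hij]
  set fk : D[X] := ∏ t ∈ Finset.range k, (X - C (b t)) with hfk
  have hfkmonic : fk.Monic := monic_prod_of_monic _ _ fun t _ => monic_X_sub_C (b t)
  have hfkdeg : fk.natDegree = k := by
    rw [hfk, Polynomial.natDegree_prod _ _ (fun t _ => X_sub_C_ne_zero (b t))]
    simp
  have heval : ∀ (x : D) (j : ℕ),
      (∏ t ∈ Finset.range j, (X - C (b t)) : D[X]).eval x
        = ∏ t ∈ Finset.range j, (x - b t) := by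
    intro x j
    rw [Polynomial.eval_prod]
    simp
  refine ⟨hfkmonic, ?_, ?_⟩
  · rw [hmem]
    intro x hx
    rw [hfk, heval]
    exact hord k x hx ℓ hk
  · intro g hgmon hgmem
    by_contra hlt
    push_neg at hlt
    -- g has degree < k
    have hm : g.natDegree < k := by
      have h1 : g.degree = (g.natDegree : ℕ) := Polynomial.degree_eq_natDegree hgmon.ne_zero
      have h2 : fk.degree = (k : ℕ) := by
        rw [Polynomial.degree_eq_natDegree hfkmonic.ne_zero, hfkdeg]
      rw [h1, h2] at hlt
      exact_mod_cast hlt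
    set m := g.natDegree with hmdef
    obtain ⟨c, hgc, hctop⟩ := newton_expansion b m g Polynomial.degree_le_natDegree
    rw [hgmon.coeff_natDegree] at hctop
    have hgdvd : ∀ x ∈ Set.range a, p ^ ℓ ∣ g.eval x := (hmem g).mp hgmem
    -- the key claim
    have claim : ∀ j, j ≤ m → ∀ x ∈ Set.range a,
        p ^ ℓ ∣ c j * ∏ t ∈ Finset.range j, (x - b t) := by
      intro j
      induction j using Nat.strong_induction_on with
      | _ j ih =>
        intro hjm x hx
        -- first: at x = b j
        have h1 : p ^ ℓ ∣ c j * ∏ t ∈ Finset.range j, (b j - b t) := by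
          have hev : g.eval (b j)
              = ∑ i ∈ Finset.range (m + 1), c i * ∏ t ∈ Finset.range i, (b j - b t) := by
            conv_lhs => rw [hgc]
            rw [Polynomial.eval_finset_sum]
            apply Finset.sum_congr rfl
            intro i _
            rw [Polynomial.eval_mul, Polynomial.eval_C, heval]
          have hsplit : ∑ i ∈ Finset.range (m + 1), c i * ∏ t ∈ Finset.range i, (b j - b t)
              = ∑ i ∈ Finset.range (j + 1), c i * ∏ t ∈ Finset.range i, (b j - b t) := by
            rw [← Finset.sum_range_add_sum_Ico _ (by omega : j + 1 ≤ m + 1)]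
            have : ∑ i ∈ Finset.Ico (j + 1) (m + 1),
                c i * ∏ t ∈ Finset.range i, (b j - b t) = 0 := by
              apply Finset.sum_eq_zero
              intro i hi
              simp only [Finset.mem_Ico] at hi
              have : ∏ t ∈ Finset.range i, (b j - b t) = 0 :=
                Finset.prod_eq_zero (Finset.mem_range.mpr (by omega)) (sub_self _)
              rw [this, mul_zero]
            rw [this, add_zero]
          have hsucc : ∑ i ∈ Finset.range (j + 1), c i * ∏ t ∈ Finset.range i, (b j - b t)
              = (∑ i ∈ Finset.range j, c i * ∏ t ∈ Finset.range i, (b j - b t))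
                + c j * ∏ t ∈ Finset.range j, (b j - b t) := Finset.sum_range_succ _ _
          have heq : c j * ∏ t ∈ Finset.range j, (b j - b t)
              = g.eval (b j) - ∑ i ∈ Finset.range j, c i * ∏ t ∈ Finset.range i, (b j - b t) := by
            rw [hev, hsplit, hsucc]; ring
          rw [heq]
          apply dvd_sub
          · exact hgdvd (b j) (hbS j)
          · refine Finset.dvd_sum fun i hi => ?_
            have hij : i < j := Finset.mem_range.mp hi
            exact ih i hij (by omega) (b j) (hbS j)
        -- transfer to arbitrary x ∈ S via hord
        by_cases hcj : p ^ ℓ ∣ c j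
        · exact hcj.mul_right _
        · have hex : ∃ i, ¬ p ^ i ∣ c j := ⟨ℓ, hcj⟩
          set N := Nat.find hex with hNdef
          have hN : ¬ p ^ N ∣ c j := Nat.find_spec hex
          have hN0 : N ≠ 0 := by
            intro h
            rw [h, pow_zero] at hN
            exact hN (one_dvd _)
          have hNle : N ≤ ℓ := Nat.find_le hcj
          set e := N - 1 with hedef
          have he1 : p ^ e ∣ c j := by
            by_contra h
            exact Nat.find_min hex (by omega) h
          obtain ⟨u, hu⟩ := he1
          have hpu : ¬ p ∣ u := by
            rintro ⟨v, rfl⟩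
            apply hN
            refine ⟨v, ?_⟩
            rw [hu, show N = e + 1 by omega, pow_succ]
            ring
          have h2 : p ^ (ℓ - e) ∣ u * ∏ t ∈ Finset.range j, (b j - b t) := by
            have h1' := h1
            rw [hu, mul_assoc, show ℓ = e + (ℓ - e) by omega, pow_add] at h1'
            exact (mul_dvd_mul_iff_left (pow_ne_zero e hp.ne_zero)).mp h1'
          have h3 : p ^ (ℓ - e) ∣ ∏ t ∈ Finset.range j, (b j - b t) :=
            hp.pow_dvd_of_dvd_mul_left _ hpu h2
          have h4 : p ^ (ℓ - e) ∣ ∏ t ∈ Finset.range j, (x - b t) :=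
            hord j x hx (ℓ - e) h3
          calc p ^ ℓ = p ^ e * p ^ (ℓ - e) := by
                rw [← pow_add]; congr 1; omega
            _ ∣ c j * ∏ t ∈ Finset.range j, (x - b t) :=
                mul_dvd_mul ⟨u, hu⟩ h4
    -- contradiction with minimality of k
    have := claim m le_rfl (b m) (hbS m)
    rw [hctop, one_mul] at this
    exact hkmin m hm this
end

section
/- Let D be a principal ideal domain with quotient field K and A an n×n matrix over D with minimal polynomial μ_A ∈ D[X]. The following are equivalent: (1) Int(A, M_n(D)) = μ_A·K[X] + D[X]; (2) every f ∈ Int(A, M_n(D)) with f ∉ D[X] satisfies deg(f) ≥ deg(μ_A); (3) the ring of images {f(A) : f ∈ Int(A, M_n(D))} equals D[A]. -/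
/-- `f ∈ Int(A, M_n(D))`: the polynomial `f ∈ K[X]` is integer-valued on `A`, i.e. `f(A)`
(computed in `M_n(K)`) has all entries in (the image of) `D`. -/
def IsIntValuedOn {D K : Type*} [CommRing D] [CommRing K] [Algebra D K] {n : ℕ}
    (A : Matrix (Fin n) (Fin n) D) (f : Polynomial K) : Prop :=
  ∃ B : Matrix (Fin n) (Fin n) D,
    Polynomial.aeval (A.map (algebraMap D K)) f = B.map (algebraMap D K)

/-- Let `D` be a PID with quotient field `K` and `A` a matrix over `D`
with minimal polynomial `μ_A ∈ D[X]`. The following are equivalent: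
(1) `Int(A, M_n(D)) = μ_A·K[X] + D[X]`;
(2) every `f ∈ Int(A, M_n(D))` with `f ∉ D[X]` satisfies `deg f ≥ deg μ_A`;
(3) the ring of images `{f(A) : f ∈ Int(A, M_n(D))}` equals `D[A]`. -/
theorem stmt16 {D : Type*} [CommRing D] [IsDomain D] [IsPrincipalIdealRing D]
    (K : Type*) [Field K] [Algebra D K] [IsFractionRing D K]
    {n : ℕ} (A : Matrix (Fin n) (Fin n) D)
    (μ : Polynomial D)
    (hμ : μ.map (algebraMap D K) = minpoly K (A.map (algebraMap D K))) :
    [ (∀ f : Polynomial K, IsIntValuedOn A f ↔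
        ∃ (h : Polynomial K) (g : Polynomial D),
          f = μ.map (algebraMap D K) * h + g.map (algebraMap D K)),
      (∀ f : Polynomial K, IsIntValuedOn A f →
        (¬ ∃ g : Polynomial D, g.map (algebraMap D K) = f) →
          μ.natDegree ≤ f.natDegree),
      ({M : Matrix (Fin n) (Fin n) K |
          ∃ f : Polynomial K, IsIntValuedOn A f ∧
            M = Polynomial.aeval (A.map (algebraMap D K)) f} =
        {M : Matrix (Fin n) (Fin n) K |
          ∃ g : Polynomial D, M = (Polynomial.aeval A g).map (algebraMap D K)})
    ].TFAE := by
  classical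
  have hinj : Function.Injective (algebraMap D K) := IsFractionRing.injective D K
  set φ : D →+* K := algebraMap D K with hφ
  set A' : Matrix (Fin n) (Fin n) K := A.map φ with hA'
  -- compatibility of aeval with matrix map
  have hcomp : (algebraMap K (Matrix (Fin n) (Fin n) K)).comp φ =
      (φ.mapMatrix).comp (algebraMap D (Matrix (Fin n) (Fin n) D)) := by
    refine RingHom.ext fun d => Matrix.ext fun i j => ?_
    by_cases hij : i = j <;> simp [Matrix.algebraMap_matrix_apply, Matrix.map_apply, hij]
  have hval : ∀ g : Polynomial D,
      Polynomial.aeval A' (g.map φ) = (Polynomial.aeval A g).map φ := by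
    intro g
    have := Polynomial.map_aeval_eq_aeval_map hcomp g A
    exact this.symm
  -- minpoly μ' facts
  have hint : IsIntegral K A' := IsIntegral.of_finite K A'
  have hmonic' : (μ.map φ).Monic := hμ ▸ minpoly.monic hint
  have hμ0 : Polynomial.aeval A' (μ.map φ) = 0 := by rw [hμ]; exact minpoly.aeval K A'
  have hmonic : μ.Monic := by
    have := Polynomial.leadingCoeff_map_of_injective hinj μ
    have h1 : φ μ.leadingCoeff = 1 := by rw [← this]; exact hmonic'
    exact hinj (by rw [h1, map_one])
  -- integer-valuedness of μ'*h + g'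
  have hback : ∀ (h : Polynomial K) (g : Polynomial D),
      IsIntValuedOn A (μ.map φ * h + g.map φ) := by
    intro h g
    refine ⟨Polynomial.aeval A g, ?_⟩
    rw [map_add, map_mul, hμ0, zero_mul, zero_add, hval]
  tfae_have 1 → 2 := by
    intro H f hf hnot
    obtain ⟨h, g, rfl⟩ := (H _).mp hf
    -- divide g by μ in D[X]
    have hdiv : g = μ * (g /ₘ μ) + g %ₘ μ := by
      rw [add_comm]; exact (Polynomial.modByMonic_add_div g μ).symm
    by_contra hlt
    push_neg at hlt
    have hne : h + Polynomial.map φ (g /ₘ μ) ≠ 0 := by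
      intro h0
      apply hnot
      refine ⟨g %ₘ μ, ?_⟩
      have : Polynomial.map φ g = Polynomial.map φ μ * Polynomial.map φ (g /ₘ μ)
          + Polynomial.map φ (g %ₘ μ) := by
        rw [← Polynomial.map_mul, ← Polynomial.map_add, ← hdiv]
      rw [this, ← add_assoc, ← mul_add, h0, mul_zero, zero_add]
    have hrw : Polynomial.map φ μ * h + Polynomial.map φ g =
        Polynomial.map φ μ * (h + Polynomial.map φ (g /ₘ μ)) + Polynomial.map φ (g %ₘ μ) := by
      conv_lhs => rw [hdiv]
      rw [Polynomial.map_add, Polynomial.map_mul]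
      ring
    have hdegr : (Polynomial.map φ (g %ₘ μ)).degree < (Polynomial.map φ μ).degree := by
      calc (Polynomial.map φ (g %ₘ μ)).degree ≤ (g %ₘ μ).degree := Polynomial.degree_map_le
        _ < μ.degree := Polynomial.degree_modByMonic_lt g hmonic
        _ = (Polynomial.map φ μ).degree := (Polynomial.degree_map_eq_of_injective hinj μ).symm
    have hdegmul : (Polynomial.map φ μ).degree ≤
        (Polynomial.map φ μ * (h + Polynomial.map φ (g /ₘ μ))).degree := by
      rw [Polynomial.degree_mul]
      exact le_add_of_nonneg_right (Polynomial.zero_le_degree_iff.mpr hne)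
    have hdeg : (Polynomial.map φ μ * h + Polynomial.map φ g).degree =
        (Polynomial.map φ μ * (h + Polynomial.map φ (g /ₘ μ))).degree := by
      rw [hrw]
      exact Polynomial.degree_add_eq_left_of_degree_lt (lt_of_lt_of_le hdegr hdegmul)
    have : (Polynomial.map φ μ).degree ≤ (Polynomial.map φ μ * h + Polynomial.map φ g).degree := by
      rw [hdeg]; exact hdegmul
    have hfin : μ.natDegree ≤ (Polynomial.map φ μ * h + Polynomial.map φ g).natDegree := by
      have := Polynomial.natDegree_le_natDegree this
      rwa [Polynomial.natDegree_map_eq_of_injective hinj] at this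
    exact absurd hfin (not_le.mpr hlt)
  tfae_have 2 → 3 := by
    intro H
    ext M
    simp only [Set.mem_setOf_eq]
    constructor
    · rintro ⟨f, hf, rfl⟩
      set r := f %ₘ (μ.map φ) with hr
      have hfr : Polynomial.aeval A' f = Polynomial.aeval A' r := by
        conv_lhs => rw [← Polynomial.modByMonic_add_div f (μ.map φ)]
        rw [map_add, map_mul, hμ0, zero_mul, add_zero]
      have hrint : IsIntValuedOn A r := by
        obtain ⟨B, hB⟩ := hf
        exact ⟨B, by rw [← hfr, hB]⟩
      by_cases hrD : ∃ g : Polynomial D, g.map φ = r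
      · obtain ⟨g, hg⟩ := hrD
        exact ⟨g, by rw [hfr, ← hg, hval]⟩
      · exfalso
        have hle := H r hrint hrD
        have hrne : r ≠ 0 := by
          intro h0; exact hrD ⟨0, by simp [h0]⟩
        have hlt : r.degree < (μ.map φ).degree := Polynomial.degree_modByMonic_lt f hmonic'
        rw [Polynomial.degree_eq_natDegree hrne,
          Polynomial.degree_eq_natDegree hmonic'.ne_zero,
          Polynomial.natDegree_map_eq_of_injective hinj] at hlt
        exact absurd hle (not_le.mpr (by exact_mod_cast hlt))
    · rintro ⟨g, rfl⟩
      exact ⟨g.map φ, ⟨Polynomial.aeval A g, by rw [hval]⟩, (hval g).symm⟩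
  tfae_have 3 → 1 := by
    intro H f
    constructor
    · intro hf
      have hmem : Polynomial.aeval A' f ∈ {M : Matrix (Fin n) (Fin n) K |
          ∃ g : Polynomial D, M = (Polynomial.aeval A g).map φ} := by
        rw [← H]; exact ⟨f, hf, rfl⟩
      obtain ⟨g, hg⟩ := hmem
      have hz : Polynomial.aeval A' (f - g.map φ) = 0 := by
        rw [map_sub, hval, ← hg, sub_self]
      have hdvd : μ.map φ ∣ f - g.map φ := by rw [hμ]; exact minpoly.dvd K A' hz
      obtain ⟨h, hh⟩ := hdvd
      exact ⟨h, g, by rw [← hh]; ring⟩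
    · rintro ⟨h, g, rfl⟩
      exact hback h g
  tfae_finish
end

section
/- Let D be a principal ideal domain with quotient field K and A an n×n matrix over D with minimal polynomial μ_A ∈ D[X]. Then there exist a finite set P_A of prime elements of D and natural numbers m_p ∈ ℕ for p ∈ P_A such that the ring of images {f(A) : f ∈ Int(A, M_n(D))} equals D[A] + Σ_{p ∈ P_A} Σ_{j ∈ I_A^{(p, m_p)}} (ν_{(p,j)}(A)/p^j)·D[A], where ν_{(p,j)} ∈ D[X] are (p^j)-minimal polynomials of A and I_A^{(p, m_p)} is the m_p-th index set of A with respect to p. -/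
namespace Stmt18
open Polynomial

variable {D : Type*} [CommRing D] [IsDomain D] [IsPrincipalIdealRing D] {n : ℕ}
variable {A : Matrix (Fin n) (Fin n) D}

lemma nd_zero (A : Matrix (Fin n) (Fin n) D) (d : D) : memNullDvd A d 0 :=
  ⟨0, by simp⟩

lemma nd_add {d : D} {f g : Polynomial D} (hf : memNullDvd A d f) (hg : memNullDvd A d g) :
    memNullDvd A d (f + g) := by
  obtain ⟨B, hB⟩ := hf; obtain ⟨C, hC⟩ := hg
  exact ⟨B + C, by simp [hB, hC]⟩

lemma nd_sub {d : D} {f g : Polynomial D} (hf : memNullDvd A d f) (hg : memNullDvd A d g) :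
    memNullDvd A d (f - g) := by
  obtain ⟨B, hB⟩ := hf; obtain ⟨C, hC⟩ := hg
  exact ⟨B - C, by simp [hB, hC, smul_sub]⟩

lemma nd_mul_left {d : D} {f : Polynomial D} (hf : memNullDvd A d f) (g : Polynomial D) :
    memNullDvd A d (g * f) := by
  obtain ⟨B, hB⟩ := hf
  exact ⟨Polynomial.aeval A g * B, by simp [hB, Matrix.mul_smul]⟩

lemma nd_mul_right {d : D} {f : Polynomial D} (hf : memNullDvd A d f) (g : Polynomial D) :
    memNullDvd A d (f * g) := by
  rw [mul_comm]; exact nd_mul_left hf g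

lemma nd_of_dvd {a d : D} (h : a ∣ d) {f : Polynomial D} (hf : memNullDvd A d f) :
    memNullDvd A a f := by
  obtain ⟨e, rfl⟩ := h; obtain ⟨B, hB⟩ := hf
  exact ⟨e • B, by rw [hB, smul_smul]⟩

lemma nd_smul_mul {a d : D} {f : Polynomial D} (hf : memNullDvd A d f) :
    memNullDvd A (a * d) (Polynomial.C a * f) := by
  obtain ⟨B, hB⟩ := hf
  refine ⟨B, ?_⟩
  rw [map_mul, hB, Polynomial.aeval_C, Algebra.algebraMap_eq_smul_one, smul_mul_assoc,
    one_mul, smul_smul]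

/-- there is a monic polynomial vanishing at `A`, e.g. the characteristic polynomial. -/
lemma nd_charpoly (A : Matrix (Fin n) (Fin n) D) (d : D) : memNullDvd A d A.charpoly :=
  ⟨0, by simp [Matrix.aeval_self_charpoly]⟩

lemma exists_isMinPolyMod (A : Matrix (Fin n) (Fin n) D) (d : D) :
    ∃ f, IsMinPolyMod A d f := by
  have hex : ∃ k, ∃ f : Polynomial D, f.Monic ∧ memNullDvd A d f ∧ f.natDegree = k :=
    ⟨A.charpoly.natDegree, A.charpoly, A.charpoly_monic, nd_charpoly A d, rfl⟩
  classical
  obtain ⟨f, hfm, hfd, hfk⟩ := Nat.find_spec hex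
  refine ⟨f, hfm, hfd, fun g hgm hgd => ?_⟩
  have hg : Nat.find hex ≤ g.natDegree := Nat.find_min' hex ⟨g, hgm, hgd, rfl⟩
  rw [Polynomial.degree_eq_natDegree hfm.ne_zero, Polynomial.degree_eq_natDegree hgm.ne_zero, hfk]
  exact_mod_cast hg

/-- degrees of minimal polynomials are monotone in divisibility. -/
lemma minPolyMod_degree_mono {a b : D} {f g : Polynomial D} (hf : IsMinPolyMod A a f)
    (hg : IsMinPolyMod A b g) (h : a ∣ b) : f.degree ≤ g.degree :=
  hf.2.2 g hg.1 (nd_of_dvd h hg.2.1)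

lemma matrix_smul_cancel {a : D} (ha : a ≠ 0)
    {X Y : Matrix (Fin n) (Fin n) D} (h : a • X = a • Y) : X = Y := by
  ext i j
  have := congrFun (congrFun h i) j
  simpa [Matrix.smul_apply] using mul_left_cancel₀ ha this

/-- decomposition `g = ∑_{i ≤ ℓ} p^{ℓ-i} ν_i q_i` with degree control. -/
def CD (A : Matrix (Fin n) (Fin n) D) (p : D) (ν : ℕ → Polynomial D) (ℓ : ℕ)
    (g : Polynomial D) : Prop :=
  ∃ q : ℕ → Polynomial D,
    g = ∑ i ∈ Finset.range (ℓ + 1), p ^ (ℓ - i) • (ν i * q i) ∧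
    ∀ i, (ν i * q i).degree ≤ g.degree

section core
variable {p : D} (hp : Prime p) {ν : ℕ → Polynomial D}
  (hν : ∀ j, IsMinPolyMod A (p ^ j) (ν j)) (hν0 : ν 0 = 1)

include hν in
/-- `C a * (X^k * ν j)` is in the null ideal of `p^(j)` scaled. -/
lemma nd_term (j : ℕ) (a : D) (k : ℕ) (hd : p ^ j ∣ a * p ^ j) :
    memNullDvd A (p ^ j) (Polynomial.C a * (Polynomial.X ^ k * ν j)) :=
  nd_of_dvd hd (nd_smul_mul (nd_mul_left (hν j).2.1 _))

include hp hν in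
/-- Core lemma: an element of `N_{p^{ℓ+1}}` of degree less than `deg ν_{ℓ+1}`
is divisible by `p`, assuming the decomposition property at level `ℓ`. -/
lemma lemM (ℓ : ℕ) (hC : ∀ g, memNullDvd A (p ^ ℓ) g → CD A p ν ℓ g) :
    ∀ g, memNullDvd A (p ^ (ℓ + 1)) g → g.degree < (ν (ℓ + 1)).degree →
      ∃ g₁, g = p • g₁ := by
  suffices H : ∀ N, ∀ g : Polynomial D, g.natDegree < N →
      memNullDvd A (p ^ (ℓ + 1)) g → g.degree < (ν (ℓ + 1)).degree → ∃ g₁, g = p • g₁ by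
    intro g hmem hdeg; exact H (g.natDegree + 1) g (Nat.lt_succ_self _) hmem hdeg
  intro N
  induction N with
  | zero => intro g h; omega
  | succ N IH =>
    intro g hgN hgmem hgdeg
    by_cases hg0 : g = 0
    · exact ⟨0, by simp [hg0]⟩
    obtain ⟨q, hsum, hdegctl⟩ :=
      hC g (nd_of_dvd (pow_dvd_pow p (Nat.le_succ ℓ)) hgmem)
    -- split off the top term
    have hsplit : g = ν ℓ * q ℓ + p • ∑ i ∈ Finset.range ℓ, p ^ (ℓ - 1 - i) • (ν i * q i) := by
      rw [hsum, Finset.sum_range_succ, Nat.sub_self, pow_zero, one_smul, add_comm,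
        Finset.smul_sum]
      congr 1
      refine Finset.sum_congr rfl fun i hi => ?_
      rw [Finset.mem_range] at hi
      rw [smul_smul, ← pow_succ']
      congr 2
      omega
    set w : Polynomial D := ∑ i ∈ Finset.range ℓ, p ^ (ℓ - 1 - i) • (ν i * q i) with hw
    -- the quotient map mod p
    set I : Ideal D := Ideal.span {p} with hI
    have hIprime : I.IsPrime := (Ideal.span_singleton_prime hp.ne_zero).mpr hp
    have hpbar : Ideal.Quotient.mk I p = 0 :=
      Ideal.Quotient.eq_zero_iff_mem.mpr (Ideal.mem_span_singleton.mpr dvd_rfl)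
    have hdvd_iff : ∀ u : Polynomial D,
        u.map (Ideal.Quotient.mk I) = 0 ↔ ∃ u₁, u = p • u₁ := by
      intro u
      constructor
      · intro h
        have : ∀ i, p ∣ u.coeff i := by
          intro i
          have := congrArg (fun v => Polynomial.coeff v i) h
          simp only [Polynomial.coeff_map, Polynomial.coeff_zero] at this
          exact Ideal.mem_span_singleton.mp (Ideal.Quotient.eq_zero_iff_mem.mp this)
        obtain ⟨u₁, hu₁⟩ := (Polynomial.C_dvd_iff_dvd_coeff p u).mpr this
        exact ⟨u₁, by rw [hu₁, Polynomial.smul_eq_C_mul]⟩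
      · rintro ⟨u₁, rfl⟩
        rw [Polynomial.smul_eq_C_mul, Polynomial.map_mul, Polynomial.map_C, hpbar,
          Polynomial.C_0, zero_mul]
    set mk := Ideal.Quotient.mk I
    have hgbar : g.map mk = (ν ℓ).map mk * (q ℓ).map mk := by
      rw [hsplit]
      rw [Polynomial.map_add, Polynomial.map_mul]
      have : (p • w).map mk = 0 := by
        rw [Polynomial.smul_eq_C_mul, Polynomial.map_mul, Polynomial.map_C, hpbar,
          Polynomial.C_0, zero_mul]
      rw [this, add_zero]
    by_cases hq0 : (q ℓ).map mk = 0
    · -- then p ∣ q ℓ, so p ∣ g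
      obtain ⟨q₂, hq₂⟩ := (hdvd_iff (q ℓ)).mp hq0
      refine ⟨ν ℓ * q₂ + w, ?_⟩
      rw [hsplit, hq₂, smul_add]
      congr 1
      rw [Polynomial.smul_eq_C_mul, Polynomial.smul_eq_C_mul]; ring
    · -- q ℓ nonzero mod p
      have hνℓmonic := (hν ℓ).1
      have hνbar : ((ν ℓ).map mk).Monic := hνℓmonic.map mk
      have hgbar0 : g.map mk ≠ 0 := by
        rw [hgbar]; exact mul_ne_zero hνbar.ne_zero hq0
      set e := (ν ℓ).natDegree with he
      set t := ((q ℓ).map mk).natDegree with ht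
      set m := g.natDegree with hm
      have hebar : ((ν ℓ).map mk).natDegree = e := hνℓmonic.natDegree_map mk
      have hgbardeg : (g.map mk).natDegree = e + t := by
        rw [hgbar, Polynomial.natDegree_mul hνbar.ne_zero hq0, hebar]
      have hle : e + t ≤ m := by
        rw [← hgbardeg]; exact Polynomial.natDegree_map_le
      rcases eq_or_lt_of_le hle with hcase | hcase
      · -- Case A : contradiction with minimality of ν (ℓ+1)
        exfalso
        have hXν : (Polynomial.X ^ t * ν ℓ : Polynomial D).Monic :=
          (Polynomial.monic_X_pow t).mul hνℓmonic
        have hXνdeg : (Polynomial.X ^ t * ν ℓ : Polynomial D).natDegree = m := by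
          rw [Polynomial.natDegree_mul (Polynomial.monic_X_pow t).ne_zero hνℓmonic.ne_zero,
            Polynomial.natDegree_X_pow]
          omega
        have ha : ¬ p ∣ g.coeff m := by
          intro hdvd
          have h0 : mk (g.coeff m) = 0 :=
            Ideal.Quotient.eq_zero_iff_mem.mpr (Ideal.mem_span_singleton.mpr hdvd)
          have hcm : (g.map mk).coeff m ≠ 0 := by
            have hnd : (g.map mk).natDegree = m := by omega
            rw [← hnd]
            exact Polynomial.leadingCoeff_ne_zero.mpr hgbar0
          rw [Polynomial.coeff_map] at hcm
          exact hcm h0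
        obtain ⟨u, v, huv⟩ := (hp.irreducible.coprime_iff_not_dvd).mpr ha
        set G := Polynomial.C v * g + Polynomial.C (u * p) * (Polynomial.X ^ t * ν ℓ) with hG
        have hGmem : memNullDvd A (p ^ (ℓ + 1)) G := by
          refine nd_add (nd_mul_left hgmem _) ?_
          refine nd_of_dvd ⟨u, by ring⟩ (nd_smul_mul (nd_mul_left (hν ℓ).2.1 _))
        have hXνcm : (Polynomial.X ^ t * ν ℓ : Polynomial D).coeff m = 1 := by
          rw [← hXνdeg]; exact hXν.coeff_natDegree
        have hGcoeff : G.coeff m = 1 := by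
          rw [hG, Polynomial.coeff_add, Polynomial.coeff_C_mul, Polynomial.coeff_C_mul,
            hXνcm]
          linear_combination huv
        have hGle : G.natDegree ≤ m := by
          refine (Polynomial.natDegree_add_le _ _).trans (max_le ?_ ?_)
          · exact Polynomial.natDegree_C_mul_le _ _
          · exact (Polynomial.natDegree_C_mul_le _ _).trans (le_of_eq hXνdeg)
        have hGmonic : G.Monic := Polynomial.monic_of_natDegree_le_of_coeff_eq_one m hGle hGcoeff
        have hmin : (ν (ℓ + 1)).degree ≤ G.degree := (hν (ℓ + 1)).2.2 G hGmonic hGmem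
        have hGdeg : G.degree ≤ (m : WithBot ℕ) :=
          Polynomial.degree_le_natDegree.trans (by exact_mod_cast hGle)
        have hgm : g.degree = (m : WithBot ℕ) := Polynomial.degree_eq_natDegree hg0
        rw [hgm] at hgdeg
        exact absurd (lt_of_le_of_lt (hmin.trans hGdeg) hgdeg) (lt_irrefl _)
      · -- Case B : strip the top coefficient and recurse
        have hbar0 : (g.map mk).coeff m = 0 :=
          Polynomial.coeff_eq_zero_of_natDegree_lt (by omega)
        have hpb : p ∣ g.coeff m := by
          rw [Polynomial.coeff_map] at hbar0
          exact Ideal.mem_span_singleton.mp (Ideal.Quotient.eq_zero_iff_mem.mp hbar0)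
        obtain ⟨b, hb⟩ := hpb
        have hem : e ≤ m := by omega
        have hXν : (Polynomial.X ^ (m - e) * ν ℓ : Polynomial D).Monic :=
          (Polynomial.monic_X_pow _).mul hνℓmonic
        have hXνdeg : (Polynomial.X ^ (m - e) * ν ℓ : Polynomial D).natDegree = m := by
          rw [Polynomial.natDegree_mul (Polynomial.monic_X_pow _).ne_zero hνℓmonic.ne_zero,
            Polynomial.natDegree_X_pow]
          omega
        set g₁ := g - Polynomial.C (p * b) * (Polynomial.X ^ (m - e) * ν ℓ) with hg₁
        have hg₁mem : memNullDvd A (p ^ (ℓ + 1)) g₁ :=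
          nd_sub hgmem
            (nd_of_dvd ⟨b, by ring⟩ (nd_smul_mul (nd_mul_left (hν ℓ).2.1 _)))
        have hXνcm : (Polynomial.X ^ (m - e) * ν ℓ : Polynomial D).coeff m = 1 := by
          have h := hXν.coeff_natDegree
          rwa [hXνdeg] at h
        have hg₁cm : g₁.coeff m = 0 := by
          rw [hg₁, Polynomial.coeff_sub, Polynomial.coeff_C_mul, hXνcm, mul_one, hb, sub_self]
        by_cases hg₁0 : g₁ = 0
        · refine ⟨Polynomial.C b * (Polynomial.X ^ (m - e) * ν ℓ), ?_⟩
          have hgeq : g = Polynomial.C (p * b) * (Polynomial.X ^ (m - e) * ν ℓ) := by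
            rw [hg₁] at hg₁0
            exact sub_eq_zero.mp hg₁0
          rw [hgeq, Polynomial.smul_eq_C_mul, Polynomial.C_mul]
          ring
        · have hg₁le : g₁.natDegree ≤ m := by
            refine (Polynomial.natDegree_sub_le _ _).trans (max_le le_rfl ?_)
            exact (Polynomial.natDegree_C_mul_le _ _).trans (le_of_eq hXνdeg)
          have hg₁lt : g₁.natDegree < m := by
            rcases lt_or_eq_of_le hg₁le with h | h
            · exact h
            · exfalso
              apply Polynomial.leadingCoeff_ne_zero.mpr hg₁0
              rw [Polynomial.leadingCoeff, h]
              exact hg₁cm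
          have hg₁deg : g₁.degree < (ν (ℓ + 1)).degree := by
            have h1 : g₁.degree = (g₁.natDegree : WithBot ℕ) :=
              Polynomial.degree_eq_natDegree hg₁0
            have h2 : g.degree = (m : WithBot ℕ) := Polynomial.degree_eq_natDegree hg0
            calc g₁.degree = (g₁.natDegree : WithBot ℕ) := h1
              _ < (m : WithBot ℕ) := by exact_mod_cast hg₁lt
              _ = g.degree := h2.symm
              _ < (ν (ℓ + 1)).degree := hgdeg
          obtain ⟨g₂, hg₂⟩ := IH g₁ (by omega) hg₁mem hg₁deg
          refine ⟨g₂ + Polynomial.C b * (Polynomial.X ^ (m - e) * ν ℓ), ?_⟩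
          have : g = g₁ + Polynomial.C (p * b) * (Polynomial.X ^ (m - e) * ν ℓ) := by
            rw [hg₁]; ring
          rw [this, hg₂]
          rw [Polynomial.smul_eq_C_mul, Polynomial.smul_eq_C_mul, Polynomial.C_mul]
          ring

include hp hν hν0 in
/-- The decomposition theorem for null ideals `N_{p^ℓ}`. -/
lemma lemC : ∀ ℓ : ℕ, ∀ g, memNullDvd A (p ^ ℓ) g → CD A p ν ℓ g := by
  intro ℓ
  induction ℓ with
  | zero =>
    intro g hg
    refine ⟨fun i => if i = 0 then g else 0, ?_, ?_⟩
    · simp [hν0]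
    · intro i
      by_cases hi : i = 0 <;> simp [hν0, hi]
  | succ ℓ ihℓ =>
    -- inner strong induction on the degree of `g`
    suffices H : ∀ N, ∀ g : Polynomial D, g.natDegree < N →
        memNullDvd A (p ^ (ℓ + 1)) g → CD A p ν (ℓ + 1) g by
      intro g hg; exact H (g.natDegree + 1) g (Nat.lt_succ_self _) hg
    intro N
    induction N with
    | zero => intro g h; omega
    | succ N IH =>
      intro g hgN hgmem
      by_cases hg0 : g = 0
      · exact ⟨fun _ => 0, by simp [hg0], by simp [hg0]⟩
      by_cases hdeg : g.degree < (ν (ℓ + 1)).degree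
      · -- hard case: g is divisible by p and we use the decomposition at level ℓ
        obtain ⟨g₁, rfl⟩ := lemM hp hν ℓ (ihℓ) g hgmem hdeg
        have hg₁mem : memNullDvd A (p ^ ℓ) g₁ := by
          obtain ⟨B, hB⟩ := hgmem
          refine ⟨B, matrix_smul_cancel hp.ne_zero (X := Polynomial.aeval A g₁) ?_⟩
          have h1 : Polynomial.aeval A (p • g₁) = p ^ (ℓ + 1) • B := hB
          rw [map_smul] at h1
          rw [h1, pow_succ, mul_comm, mul_smul]
        obtain ⟨q, hsum, hdegctl⟩ := ihℓ g₁ hg₁mem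
        have hdegeq : (p • g₁).degree = g₁.degree := by
          rw [Polynomial.smul_eq_C_mul, Polynomial.degree_mul,
            Polynomial.degree_C hp.ne_zero, zero_add]
        refine ⟨fun i => if i = ℓ + 1 then 0 else q i, ?_, ?_⟩
        · beta_reduce
          have hstep : ∀ i ∈ Finset.range (ℓ + 1),
              p ^ (ℓ + 1 - i) • (ν i * if i = ℓ + 1 then 0 else q i) =
              p • (p ^ (ℓ - i) • (ν i * q i)) := by
            intro i hi
            rw [Finset.mem_range] at hi
            rw [if_neg (by omega), smul_smul, ← pow_succ']
            congr 2
            omega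
          rw [Finset.sum_range_succ, if_pos rfl, mul_zero, smul_zero, add_zero,
            Finset.sum_congr rfl hstep, ← Finset.smul_sum, ← hsum]
        · intro i
          beta_reduce
          by_cases hi : i = ℓ + 1
          · simp [hi]
          · rw [if_neg hi, hdegeq]
            exact hdegctl i
      · -- divide by ν (ℓ+1)
        push_neg at hdeg
        have hmonic := (hν (ℓ + 1)).1
        obtain ⟨qq, r, hgeq, hrd⟩ :
            ∃ qq r : Polynomial D, g = ν (ℓ + 1) * qq + r ∧ r.degree < (ν (ℓ + 1)).degree := by
          refine ⟨g /ₘ ν (ℓ + 1), g %ₘ ν (ℓ + 1), ?_, Polynomial.degree_modByMonic_lt g hmonic⟩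
          conv_lhs => rw [← Polynomial.modByMonic_add_div g (ν (ℓ + 1))]
          ring
        have hrg : r.degree ≤ g.degree := hrd.le.trans hdeg
        have hrmem : memNullDvd A (p ^ (ℓ + 1)) r := by
          have h1 : r = g - ν (ℓ + 1) * qq := by rw [hgeq]; ring
          rw [h1]
          exact nd_sub hgmem (nd_mul_right (hν (ℓ + 1)).2.1 qq)
        have hνqdeg : (ν (ℓ + 1) * qq).degree ≤ g.degree := by
          have h1 : ν (ℓ + 1) * qq = g - r := by rw [hgeq]; ring
          rw [h1]
          exact (Polynomial.degree_sub_le _ _).trans (max_le le_rfl hrg)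
        by_cases hr0 : r = 0
        · refine ⟨fun i => if i = ℓ + 1 then qq else 0, ?_, ?_⟩
          · beta_reduce
            rw [Finset.sum_range_succ, if_pos rfl, Nat.sub_self, pow_zero, one_smul]
            rw [Finset.sum_eq_zero fun i hi => ?_, zero_add]
            · rw [hgeq, hr0, add_zero]
            · rw [Finset.mem_range] at hi
              rw [if_neg (by omega), mul_zero, smul_zero]
          · intro i
            beta_reduce
            by_cases hi : i = ℓ + 1
            · rw [if_pos hi, hi]; exact hνqdeg
            · simp [if_neg hi]
        · have hrN : r.natDegree < N := by
            have h1 : r.natDegree < (ν (ℓ + 1)).natDegree :=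
              Polynomial.natDegree_lt_natDegree hr0 hrd
            have h2 : (ν (ℓ + 1)).natDegree ≤ g.natDegree :=
              Polynomial.natDegree_le_natDegree hdeg
            omega
          obtain ⟨q, hsum, hdegctl⟩ := IH r hrN hrmem
          refine ⟨fun i => if i = ℓ + 1 then q i + qq else q i, ?_, ?_⟩
          · beta_reduce
            have hterm : ∀ i ∈ Finset.range (ℓ + 2),
                p ^ (ℓ + 1 - i) • (ν i * if i = ℓ + 1 then q i + qq else q i) =
                p ^ (ℓ + 1 - i) • (ν i * q i) +
                  (if i = ℓ + 1 then ν (ℓ + 1) * qq else 0) := by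
              intro i _
              by_cases hi : i = ℓ + 1
              · subst hi
                rw [if_pos rfl, if_pos rfl, Nat.sub_self, pow_zero, one_smul, one_smul,
                  mul_add, add_comm]
              · rw [if_neg hi, if_neg hi, add_zero]
            rw [Finset.sum_congr rfl hterm, Finset.sum_add_distrib,
              Finset.sum_ite_eq' (Finset.range (ℓ + 2)) (ℓ + 1) fun _ => ν (ℓ + 1) * qq,
              if_pos (Finset.self_mem_range_succ _), ← hsum, hgeq]
            ring
          · intro i
            beta_reduce
            by_cases hi : i = ℓ + 1
            · subst hi
              rw [if_pos rfl, mul_add]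
              refine (Polynomial.degree_add_le _ _).trans (max_le ?_ hνqdeg)
              exact (hdegctl _).trans hrg
            · rw [if_neg hi]
              exact (hdegctl i).trans hrg

section stage2
variable (W : ℕ → Matrix (Fin n) (Fin n) D)
  (hW : ∀ j, p ^ j • W j = Polynomial.aeval A (ν j)) (m : ℕ)

/-- membership in `D[A] + ∑_{j ∈ I} W_j · D[A]`. -/
def inS (A : Matrix (Fin n) (Fin n) D) (W : ℕ → Matrix (Fin n) (Fin n) D)
    (ν : ℕ → Polynomial D) (m : ℕ) (x : Matrix (Fin n) (Fin n) D) : Prop :=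
  ∃ (g : Polynomial D) (c : ℕ → Polynomial D),
    x = Polynomial.aeval A g + ∑ j ∈ indexSet ν m, W j * Polynomial.aeval A (c j)

lemma inS_aeval (g : Polynomial D) : inS A W ν m (Polynomial.aeval A g) :=
  ⟨g, fun _ => 0, by simp⟩

lemma inS_add {x y} (hx : inS A W ν m x) (hy : inS A W ν m y) : inS A W ν m (x + y) := by
  obtain ⟨g₁, c₁, rfl⟩ := hx; obtain ⟨g₂, c₂, rfl⟩ := hy
  refine ⟨g₁ + g₂, fun j => c₁ j + c₂ j, ?_⟩
  rw [map_add]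
  have h1 : ∀ j ∈ indexSet ν m, W j * Polynomial.aeval A (c₁ j + c₂ j) =
      W j * Polynomial.aeval A (c₁ j) + W j * Polynomial.aeval A (c₂ j) := by
    intro j _; rw [map_add, mul_add]
  rw [Finset.sum_congr rfl h1, Finset.sum_add_distrib]
  abel

lemma inS_smul (a : D) {x} (hx : inS A W ν m x) : inS A W ν m (a • x) := by
  obtain ⟨g, c, rfl⟩ := hx
  refine ⟨Polynomial.C a * g, fun j => Polynomial.C a * c j, ?_⟩
  rw [smul_add, map_mul, Polynomial.aeval_C, ← Algebra.smul_def, Finset.smul_sum]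
  congr 1
  refine Finset.sum_congr rfl fun j _ => ?_
  rw [map_mul, Polynomial.aeval_C, ← Algebra.smul_def, Matrix.mul_smul]

lemma inS_sub {x y} (hx : inS A W ν m x) (hy : inS A W ν m y) : inS A W ν m (x - y) := by
  have := inS_add W m hx (inS_smul W m (-1) hy)
  simpa [neg_one_smul, sub_eq_add_neg] using this

lemma inS_mulA {x} (hx : inS A W ν m x) (h : Polynomial D) :
    inS A W ν m (x * Polynomial.aeval A h) := by
  obtain ⟨g, c, rfl⟩ := hx
  refine ⟨g * h, fun j => c j * h, ?_⟩
  rw [add_mul, map_mul, Finset.sum_mul]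
  congr 1
  refine Finset.sum_congr rfl fun j _ => ?_
  rw [map_mul, mul_assoc]

lemma inS_W {j : ℕ} (hj : j ∈ indexSet ν m) : inS A W ν m (W j) := by
  classical
  refine ⟨0, fun i => if i = j then 1 else 0, ?_⟩
  rw [map_zero, zero_add]
  rw [Finset.sum_eq_single_of_mem j hj ?_]
  · simp
  · intro i _ hij
    simp [hij]

lemma inS_zero : inS A W ν m 0 := by simpa using inS_aeval W m 0

lemma inS_sum {s : Finset ℕ} {f : ℕ → Matrix (Fin n) (Fin n) D}
    (hf : ∀ i ∈ s, inS A W ν m (f i)) : inS A W ν m (∑ i ∈ s, f i) := by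
  classical
  induction s using Finset.induction_on with
  | empty => simpa using inS_zero W m
  | @insert a s ha ih =>
    rw [Finset.sum_insert ha]
    exact inS_add W m (hf a (Finset.mem_insert_self a s))
      (ih fun i hi => hf i (Finset.mem_insert_of_mem hi))

include hp hν hν0 in
lemma W_mem (hW : ∀ j, p ^ j • W j = Polynomial.aeval A (ν j)) :
    ∀ i, i ≤ m → inS A W ν m (W i) := by
  intro i
  induction i using Nat.strong_induction_on with
  | _ i IH =>
    intro him
    by_cases hiI : i ∈ indexSet ν m
    · exact inS_W W m hiI
    by_cases hi0 : i = 0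
    · subst hi0
      have h1 : W 0 = Polynomial.aeval A (ν 0) := by simpa using hW 0
      rw [h1]; exact inS_aeval W m (ν 0)
    have him' : i < m := by
      rcases lt_or_eq_of_le him with h | h
      · exact h
      · subst h; exact absurd (Finset.mem_insert_self i _) hiI
    have hne : ((indexSet ν m).filter fun j => i < j).Nonempty :=
      ⟨m, Finset.mem_filter.mpr ⟨Finset.mem_insert_self m _, him'⟩⟩
    set j := ((indexSet ν m).filter fun j => i < j).min' hne with hj
    have hjmem : j ∈ (indexSet ν m).filter fun j => i < j := Finset.min'_mem _ hne
    have hjI : j ∈ indexSet ν m := (Finset.mem_filter.mp hjmem).1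
    have hij : i < j := (Finset.mem_filter.mp hjmem).2
    have hjm : j ≤ m := by
      have : j ≤ m := Finset.min'_le _ m (Finset.mem_filter.mpr ⟨Finset.mem_insert_self m _, him'⟩)
      exact this
    -- no index-set element strictly between i and j, hence degrees are constant
    have hnotI : ∀ k, i ≤ k → k < j → k ∉ indexSet ν m := by
      intro k hik hkj hkI
      rcases lt_or_eq_of_le hik with h | h
      · exact absurd (Finset.min'_le _ k (Finset.mem_filter.mpr ⟨hkI, h⟩)) (not_le.mpr hkj)
      · exact hiI (h ▸ hkI)
    have hmono : ∀ k, (ν k).natDegree ≤ (ν (k + 1)).natDegree := by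
      intro k
      exact Polynomial.natDegree_le_natDegree
        ((hν k).2.2 _ (hν (k + 1)).1 (nd_of_dvd (pow_dvd_pow p (Nat.le_succ k)) (hν (k + 1)).2.1))
    have hdegchain : ∀ t, i + t ≤ j → (ν i).natDegree = (ν (i + t)).natDegree := by
      intro t
      induction t with
      | zero => intro _; rfl
      | succ t iht =>
        intro ht
        have h1 := iht (by omega)
        have hk : i + t < m := by omega
        have hknotI := hnotI (i + t) (by omega) (by omega)
        have : ¬ (ν (i + t)).natDegree < (ν (i + t + 1)).natDegree := by
          intro hlt
          exact hknotI (Finset.mem_insert_of_mem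
            (Finset.mem_filter.mpr ⟨Finset.mem_range.mpr hk, hlt⟩))
        have h2 := le_antisymm (hmono (i + t)) (not_lt.mp this)
        show (ν i).natDegree = (ν (i + t + 1)).natDegree
        omega
    have hdegij : (ν i).natDegree = (ν j).natDegree := by
      have := hdegchain (j - i) (by omega)
      rwa [Nat.add_sub_cancel' hij.le] at this
    have hdegeq : (ν j).degree = (ν i).degree := by
      rw [Polynomial.degree_eq_natDegree (hν j).1.ne_zero,
        Polynomial.degree_eq_natDegree (hν i).1.ne_zero, hdegij]
    set δ := ν j - ν i with hδ
    have hδmem : memNullDvd A (p ^ i) δ :=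
      nd_sub (nd_of_dvd (pow_dvd_pow p hij.le) (hν j).2.1) (hν i).2.1
    have hWji : p ^ i • (p ^ (j - i) • W j) = p ^ j • W j := by
      rw [smul_smul, ← pow_add]
      congr 2
      omega
    by_cases hδ0 : δ = 0
    · have hνij : ν i = ν j := by
        have := sub_eq_zero.mp (hδ ▸ hδ0)
        exact this.symm
      have : p ^ i • W i = p ^ i • (p ^ (j - i) • W j) := by
        rw [hWji, hW i, hW j, hνij]
      rw [matrix_smul_cancel (pow_ne_zero i hp.ne_zero) this]
      exact inS_smul W m _ (inS_W W m hjI)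
    · have hδdeg : δ.degree < (ν i).degree := by
        rw [← hdegeq]
        exact Polynomial.degree_sub_lt hdegeq (hν j).1.ne_zero
          (by rw [(hν j).1.leadingCoeff, (hν i).1.leadingCoeff])
      obtain ⟨i', rfl⟩ : ∃ i', i = i' + 1 := ⟨i - 1, by omega⟩
      obtain ⟨h, hh⟩ := lemM hp hν i' (lemC hp hν hν0 i') δ hδmem hδdeg
      obtain ⟨B, hB⟩ := hδmem
      have hhmem : memNullDvd A (p ^ i') h := by
        refine ⟨B, matrix_smul_cancel hp.ne_zero (X := Polynomial.aeval A h) ?_⟩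
        have h2 : Polynomial.aeval A (p • h) = p ^ (i' + 1) • B := by rw [← hh]; exact hB
        rw [map_smul] at h2
        rw [h2, pow_succ, mul_comm, mul_smul]
      obtain ⟨q, hqsum, -⟩ := lemC hp hν hν0 i' h hhmem
      have haevalh : Polynomial.aeval A h =
          p ^ i' • ∑ k ∈ Finset.range (i' + 1), W k * Polynomial.aeval A (q k) := by
        rw [hqsum, map_sum, Finset.smul_sum]
        refine Finset.sum_congr rfl fun k hk => ?_
        rw [Finset.mem_range] at hk
        rw [map_smul, map_mul, ← hW k, Matrix.smul_mul, smul_smul, ← pow_add]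
        congr 2
        omega
      have hkey : p ^ (i' + 1) • (p ^ (j - (i' + 1)) • W j) =
          p ^ (i' + 1) • (W (i' + 1) +
            ∑ k ∈ Finset.range (i' + 1), W k * Polynomial.aeval A (q k)) := by
        have h3 : ν j = ν (i' + 1) + δ := by rw [hδ]; ring
        rw [hWji, hW j, h3, map_add, ← hW (i' + 1), hh, map_smul, haevalh, smul_smul,
          ← pow_succ', smul_add]
      have hfinal := matrix_smul_cancel (pow_ne_zero (i' + 1) hp.ne_zero) hkey
      have : W (i' + 1) = p ^ (j - (i' + 1)) • W j -
          ∑ k ∈ Finset.range (i' + 1), W k * Polynomial.aeval A (q k) := by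
        rw [hfinal]; abel
      rw [this]
      refine inS_sub W m (inS_smul W m _ (inS_W W m hjI)) (inS_sum W m fun k hk => ?_)
      rw [Finset.mem_range] at hk
      exact inS_mulA W m (IH k (by omega) (by omega)) _

include hp hν hν0 in
lemma perPrime (hW : ∀ j, p ^ j • W j = Polynomial.aeval A (ν j)) (x : Matrix (Fin n) (Fin n) D)
    (G : Polynomial D) (hx : p ^ m • x = Polynomial.aeval A G) : inS A W ν m x := by
  have hmem : memNullDvd A (p ^ m) G := ⟨x, hx.symm⟩
  obtain ⟨q, hsum, -⟩ := lemC hp hν hν0 m G hmem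
  have hG : Polynomial.aeval A G =
      p ^ m • ∑ i ∈ Finset.range (m + 1), W i * Polynomial.aeval A (q i) := by
    rw [hsum, map_sum, Finset.smul_sum]
    refine Finset.sum_congr rfl fun k hk => ?_
    rw [Finset.mem_range] at hk
    rw [map_smul, map_mul, ← hW k, Matrix.smul_mul, smul_smul, ← pow_add]
    congr 2
    omega
  have hxeq : x = ∑ i ∈ Finset.range (m + 1), W i * Polynomial.aeval A (q i) :=
    matrix_smul_cancel (pow_ne_zero m hp.ne_zero) (hx.trans hG)
  rw [hxeq]
  refine inS_sum W m fun i hi => ?_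
  rw [Finset.mem_range] at hi
  exact inS_mulA W m (W_mem hp hν hν0 W m hW i (by omega)) _

end stage2

end core


section assembly
variable (K : Type*) [Field K] [Algebra D K] [IsFractionRing D K]

lemma map_aeval (A : Matrix (Fin n) (Fin n) D) (f : Polynomial D) :
    Polynomial.aeval (A.map (algebraMap D K)) (f.map (algebraMap D K)) =
      (Polynomial.aeval A f).map (algebraMap D K) := by
  have h1 : A.map (algebraMap D K) = (AlgHom.mapMatrix (Algebra.ofId D K)) A := rfl
  rw [Polynomial.aeval_map_algebraMap, h1, Polynomial.aeval_algHom_apply]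
  rfl

lemma matmap_smul (a : D) (X : Matrix (Fin n) (Fin n) D) :
    (a • X).map (algebraMap D K) = algebraMap D K a • X.map (algebraMap D K) := by
  ext i j
  simp [Matrix.map_apply, Matrix.smul_apply, map_mul]

lemma matmap_inj : Function.Injective
    (fun X : Matrix (Fin n) (Fin n) D => X.map (algebraMap D K)) := by
  intro X Y h
  ext i j
  have := congrFun (congrFun h i) j
  exact IsFractionRing.injective D K this

variable (A : Matrix (Fin n) (Fin n) D)

/-- the `D`-module `D[A]` of polynomial images. -/
def polyIm : Submodule D (Matrix (Fin n) (Fin n) D) where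
  carrier := {x | ∃ g : Polynomial D, Polynomial.aeval A g = x}
  add_mem' := by
    rintro x y ⟨g, rfl⟩ ⟨h, rfl⟩
    exact ⟨g + h, map_add _ _ _⟩
  zero_mem' := ⟨0, map_zero _⟩
  smul_mem' := by
    rintro r x ⟨g, rfl⟩
    exact ⟨Polynomial.C r * g, by rw [map_mul, Polynomial.aeval_C, ← Algebra.smul_def]⟩

/-- the `D`-module of values of integer-valued polynomials at `A`. -/
def intIm : Submodule D (Matrix (Fin n) (Fin n) D) where
  carrier := {x | ∃ f : Polynomial K,
    Polynomial.aeval (A.map (algebraMap D K)) f = x.map (algebraMap D K)}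
  add_mem' := by
    rintro x y ⟨f, hf⟩ ⟨g, hg⟩
    refine ⟨f + g, ?_⟩
    rw [map_add, hf, hg]
    exact (Matrix.map_add _ (fun a b => map_add _ a b) x y).symm
  zero_mem' := ⟨0, by simp [Matrix.map_zero]⟩
  smul_mem' := by
    rintro r x ⟨f, hf⟩
    refine ⟨Polynomial.C (algebraMap D K r) * f, ?_⟩
    rw [map_mul, Polynomial.aeval_C, ← Algebra.smul_def, hf, matmap_smul]

lemma exists_denominator :
    ∃ d : D, d ≠ 0 ∧ ∀ x ∈ intIm K A, ∃ g : Polynomial D,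
      Polynomial.aeval A g = d • x := by
  classical
  obtain ⟨s, hs⟩ := IsNoetherian.noetherian (intIm K A)
  have hden : ∀ x : Matrix (Fin n) (Fin n) D, x ∈ intIm K A →
      ∃ d : D, d ≠ 0 ∧ ∃ g : Polynomial D, Polynomial.aeval A g = d • x := by
    rintro x ⟨f, hf⟩
    obtain ⟨b, hb⟩ := IsLocalization.integerNormalization_map_to_map (nonZeroDivisors D) f
    refine ⟨(b : D), nonZeroDivisors.ne_zero b.2,
      IsLocalization.integerNormalization (nonZeroDivisors D) f, ?_⟩
    apply matmap_inj K
    show (Polynomial.aeval A _).map _ = ((b : D) • x).map _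
    rw [← map_aeval, hb, matmap_smul, ← hf, ← algebraMap_smul K (b : D) f, map_smul]
  choose dfun hd0 gfun hg using hden
  have hmem : ∀ x ∈ s, x ∈ intIm K A := by
    intro x hx
    rw [← hs]
    exact Submodule.subset_span hx
  set F : Matrix (Fin n) (Fin n) D → D :=
    fun x => if hx : x ∈ intIm K A then dfun x hx else 1 with hF
  refine ⟨∏ x ∈ s, F x, ?_, ?_⟩
  · rw [Finset.prod_ne_zero_iff]
    intro x _
    by_cases hx : x ∈ intIm K A <;> simp [hF, hx, hd0]
  · intro x hx
    rw [← hs] at hx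
    induction hx using Submodule.span_induction with
    | mem y hy =>
      have hyI := hmem y hy
      have hsplit : ∏ x ∈ s, F x = F y * ∏ x ∈ s.erase y, F x :=
        (Finset.mul_prod_erase s F hy).symm
      refine ⟨Polynomial.C (∏ x ∈ s.erase y, F x) * gfun y hyI, ?_⟩
      rw [map_mul, Polynomial.aeval_C, ← Algebra.smul_def, hg y hyI, smul_smul, hsplit,
        hF]
      simp only [dif_pos hyI]
      rw [mul_comm]
    | zero => exact ⟨0, by simp⟩
    | add y z _ _ hy hz =>
      obtain ⟨g₁, hg₁⟩ := hy; obtain ⟨g₂, hg₂⟩ := hz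
      exact ⟨g₁ + g₂, by rw [map_add, hg₁, hg₂, smul_add]⟩
    | smul r y _ hy =>
      obtain ⟨g₁, hg₁⟩ := hy
      refine ⟨Polynomial.C r * g₁, ?_⟩
      rw [map_mul, Polynomial.aeval_C, ← Algebra.smul_def, hg₁, smul_comm]

lemma matmap_sum {ι : Type*} (s : Finset ι) (f : ι → Matrix (Fin n) (Fin n) D) :
    (∑ i ∈ s, f i).map (algebraMap D K) = ∑ i ∈ s, (f i).map (algebraMap D K) := by
  rw [← RingHom.mapMatrix_apply, map_sum]
  simp [RingHom.mapMatrix_apply]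

lemma matmap_add (X Y : Matrix (Fin n) (Fin n) D) :
    (X + Y).map (algebraMap D K) = X.map (algebraMap D K) + Y.map (algebraMap D K) :=
  Matrix.map_add _ (fun a b => map_add _ a b) X Y

end assembly

lemma isMinPolyMod_one (A : Matrix (Fin n) (Fin n) D) : IsMinPolyMod A 1 1 := by
  refine ⟨Polynomial.monic_one, ⟨1, by simp⟩, fun g hg _ => ?_⟩
  rw [Polynomial.degree_one]
  exact Polynomial.zero_le_degree_iff.mpr hg.ne_zero

/-- The CRT-type decomposition over a finite set of pairwise coprime primes. -/
lemma crt (ν : D → ℕ → Polynomial D) (W : D → ℕ → Matrix (Fin n) (Fin n) D) (mf : D → ℕ)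
    (A : Matrix (Fin n) (Fin n) D) :
    ∀ P : Finset D, (∀ p ∈ P, Prime p) → (∀ p ∈ P, ∀ q ∈ P, p ≠ q → IsCoprime p q) →
      (∀ p ∈ P, ∀ j, IsMinPolyMod A (p ^ j) (ν p j)) → (∀ p ∈ P, ν p 0 = 1) →
      (∀ p ∈ P, ∀ j, p ^ j • W p j = Polynomial.aeval A (ν p j)) →
      ∀ x : Matrix (Fin n) (Fin n) D,
        (∃ g : Polynomial D, Polynomial.aeval A g = (∏ p ∈ P, p ^ mf p) • x) →
        ∃ (g : Polynomial D) (c : D → ℕ → Polynomial D),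
          x = Polynomial.aeval A g +
            ∑ p ∈ P, ∑ j ∈ indexSet (ν p) (mf p), W p j * Polynomial.aeval A (c p j) := by
  classical
  intro P
  induction P using Finset.induction_on with
  | empty =>
    intro _ _ _ _ _ x hx
    obtain ⟨g, hg⟩ := hx
    rw [Finset.prod_empty, one_smul] at hg
    exact ⟨g, fun _ _ => 0, by simp [hg]⟩
  | @insert p P' hpP' IH =>
    intro hP hcop hν hν0 hW x hx
    obtain ⟨g, hg⟩ := hx
    rw [Finset.prod_insert hpP'] at hg
    set a : D := p ^ mf p with ha
    set b : D := ∏ q ∈ P', q ^ mf q with hb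
    have hab : IsCoprime a b := by
      rw [ha, hb]
      refine IsCoprime.prod_right fun q hq => ?_
      exact (hcop p (Finset.mem_insert_self p P') q (Finset.mem_insert_of_mem hq)
        (fun h => hpP' (h ▸ hq))).pow
    obtain ⟨u, v, huv⟩ := hab
    set x₂ := (u * a) • x with hx₂def
    set x₁ := (v * b) • x with hx₁def
    have hxsplit : x = x₂ + x₁ := by
      rw [hx₂def, hx₁def, ← add_smul, huv, one_smul]
    have hpmem := Finset.mem_insert_self p P'
    have hx₁ : p ^ mf p • x₁ = Polynomial.aeval A (Polynomial.C v * g) := by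
      rw [map_mul, Polynomial.aeval_C, ← Algebra.smul_def, hg, hx₁def, smul_smul, smul_smul]
      congr 1
      rw [ha]; ring
    obtain ⟨gp, cp, hx₁eq⟩ := perPrime (hP p hpmem) (hν p hpmem) (hν0 p hpmem) (W p) (mf p)
      (hW p hpmem) x₁ (Polynomial.C v * g) hx₁
    have hx₂ : ∃ g' : Polynomial D, Polynomial.aeval A g' = (∏ q ∈ P', q ^ mf q) • x₂ := by
      refine ⟨Polynomial.C u * g, ?_⟩
      rw [map_mul, Polynomial.aeval_C, ← Algebra.smul_def, hg, hx₂def, smul_smul, smul_smul,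
        ← hb]
      congr 1
      ring
    obtain ⟨g', c', hx₂eq⟩ := IH (fun q hq => hP q (Finset.mem_insert_of_mem hq))
      (fun q hq r hr hqr =>
        hcop q (Finset.mem_insert_of_mem hq) r (Finset.mem_insert_of_mem hr) hqr)
      (fun q hq => hν q (Finset.mem_insert_of_mem hq))
      (fun q hq => hν0 q (Finset.mem_insert_of_mem hq))
      (fun q hq => hW q (Finset.mem_insert_of_mem hq)) x₂ hx₂
    refine ⟨g' + gp, fun q j => if q = p then cp j else c' q j, ?_⟩
    rw [Finset.sum_insert hpP', map_add]
    beta_reduce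
    have h1 : ∑ j ∈ indexSet (ν p) (mf p),
        W p j * Polynomial.aeval A (if p = p then cp j else c' p j) =
        ∑ j ∈ indexSet (ν p) (mf p), W p j * Polynomial.aeval A (cp j) :=
      Finset.sum_congr rfl fun j _ => by simp
    have h2 : ∑ q ∈ P', ∑ j ∈ indexSet (ν q) (mf q),
        W q j * Polynomial.aeval A (if q = p then cp j else c' q j) =
        ∑ q ∈ P', ∑ j ∈ indexSet (ν q) (mf q), W q j * Polynomial.aeval A (c' q j) := by
      refine Finset.sum_congr rfl fun q hq => Finset.sum_congr rfl fun j _ => ?_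
      have hqp : q ≠ p := fun h => hpP' (h ▸ hq)
      simp [hqp]
    rw [h1, h2, hxsplit, hx₁eq, hx₂eq]
    abel

end Stmt18


/-- Let `D` be a PID with quotient field `K` and `A` a matrix over `D`
with minimal polynomial `μ_A ∈ D[X]`. Then there are a finite set `P_A` of primes of `D`,
numbers `m_p`, `(p^j)`-minimal polynomials `ν_{(p,j)}` of `A`, and matrices
`W_{p,j} = ν_{(p,j)}(A)/p^j ∈ M_n(D)` such that the ring of images
`{f(A) : f ∈ Int(A, M_n(D))}` equals
`D[A] + Σ_{p ∈ P_A} Σ_{j ∈ I_A^{(p,m_p)}} (ν_{(p,j)}(A)/p^j)·D[A]` (as subsets of `M_n(D)`). -/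
theorem stmt18 {D : Type*} [CommRing D] [IsDomain D] [IsPrincipalIdealRing D]
    (K : Type*) [Field K] [Algebra D K] [IsFractionRing D K]
    {n : ℕ} (A : Matrix (Fin n) (Fin n) D)
    (μ : Polynomial D)
    (hμ : μ.map (algebraMap D K) = minpoly K (A.map (algebraMap D K))) :
    ∃ (P : Finset D) (m : D → ℕ) (ν : D → ℕ → Polynomial D)
      (W : D → ℕ → Matrix (Fin n) (Fin n) D),
      (∀ p ∈ P, Prime p) ∧
      (∀ p ∈ P, ν p 0 = 1) ∧
      (∀ p ∈ P, ∀ j, 1 ≤ j → IsMinPolyMod A (p ^ j) (ν p j)) ∧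
      -- `W p j` is the matrix `ν_{(p,j)}(A)/p^j`:
      (∀ p ∈ P, ∀ j ∈ indexSet (ν p) (m p), p ^ j • W p j = Polynomial.aeval A (ν p j)) ∧
      ({M : Matrix (Fin n) (Fin n) D |
          ∃ f : Polynomial K, IsIntValuedOn A f ∧
            M.map (algebraMap D K) = Polynomial.aeval (A.map (algebraMap D K)) f} =
        {M : Matrix (Fin n) (Fin n) D |
          ∃ (g : Polynomial D) (c : D → ℕ → Polynomial D),
            M = Polynomial.aeval A g +
              ∑ p ∈ P, ∑ j ∈ indexSet (ν p) (m p), W p j * Polynomial.aeval A (c p j)}) := by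

  classical
  letI : NormalizationMonoid D :=
    (UniqueFactorizationMonoid.normalizationMonoid (α := D)).toNormalizationMonoid
  obtain ⟨d, hd0, hd⟩ := Stmt18.exists_denominator K A
  set facs := UniqueFactorizationMonoid.normalizedFactors d with hfacs
  set P : Finset D := facs.toFinset with hPdef
  set mf : D → ℕ := fun p => facs.count p with hmf
  have hprime : ∀ p ∈ P, Prime p := fun p hp =>
    UniqueFactorizationMonoid.prime_of_normalized_factor p (Multiset.mem_toFinset.mp hp)
  have hνex : ∀ (p : D) (j : ℕ), ∃ f, IsMinPolyMod A (p ^ j) f := fun p j =>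
    Stmt18.exists_isMinPolyMod A _
  set ν : D → ℕ → Polynomial D :=
    fun p j => if j = 0 then 1 else Classical.choose (hνex p j) with hνdef
  have hν0 : ∀ p, ν p 0 = 1 := fun p => by simp [hνdef]
  have hνmin : ∀ p, ∀ j, 1 ≤ j → IsMinPolyMod A (p ^ j) (ν p j) := by
    intro p j hj
    simp only [hνdef, if_neg (by omega : ¬ j = 0)]
    exact Classical.choose_spec (hνex p j)
  have hνall : ∀ p, ∀ j, IsMinPolyMod A (p ^ j) (ν p j) := by
    intro p j
    rcases Nat.eq_zero_or_pos j with rfl | hj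
    · rw [hν0 p, pow_zero]
      exact Stmt18.isMinPolyMod_one A
    · exact hνmin p j hj
  have hWex : ∀ (p : D) (j : ℕ), ∃ B : Matrix (Fin n) (Fin n) D,
      Polynomial.aeval A (ν p j) = p ^ j • B := fun p j => (hνall p j).2.1
  set W : D → ℕ → Matrix (Fin n) (Fin n) D :=
    fun p j => Classical.choose (hWex p j) with hWdef
  have hWspec : ∀ p j, p ^ j • W p j = Polynomial.aeval A (ν p j) := fun p j =>
    (Classical.choose_spec (hWex p j)).symm
  have hcop : ∀ p ∈ P, ∀ q ∈ P, p ≠ q → IsCoprime p q := by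
    intro p hp q hq hne
    refine ((hprime p hp).irreducible.coprime_iff_not_dvd).mpr fun hdvd => hne ?_
    have hassoc : Associated p q :=
      (hprime p hp).irreducible.associated_of_dvd (hprime q hq).irreducible hdvd
    exact hassoc.eq_of_normalized
      (UniqueFactorizationMonoid.normalize_normalized_factor p (Multiset.mem_toFinset.mp hp))
      (UniqueFactorizationMonoid.normalize_normalized_factor q (Multiset.mem_toFinset.mp hq))
  refine ⟨P, mf, ν, W, hprime, fun p _ => hν0 p, fun p _ j hj => hνmin p j hj,
    fun p _ j _ => hWspec p j, ?_⟩
  ext x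
  simp only [Set.mem_setOf_eq]
  constructor
  · rintro ⟨f, _, hmap⟩
    have hxI : x ∈ Stmt18.intIm K A := ⟨f, hmap.symm⟩
    obtain ⟨g, hg⟩ := hd x hxI
    have hassoc : Associated (∏ p ∈ P, p ^ mf p) d := by
      have h1 := UniqueFactorizationMonoid.prod_normalizedFactors hd0
      rwa [Finset.prod_multiset_count facs] at h1
    obtain ⟨uu, huu⟩ := hassoc
    have hkey : Polynomial.aeval A (Polynomial.C ((uu⁻¹ : Dˣ) : D) * g) =
        (∏ p ∈ P, p ^ mf p) • x := by
      rw [map_mul, Polynomial.aeval_C, ← Algebra.smul_def, hg, smul_smul]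
      congr 1
      rw [← huu, mul_comm (∏ p ∈ P, p ^ mf p) ((uu : D)), ← mul_assoc, Units.inv_mul,
        one_mul]
    exact Stmt18.crt ν W mf A P hprime hcop (fun p _ => hνall p) (fun p _ => hν0 p)
      (fun p _ => hWspec p) x ⟨_, hkey⟩
  · rintro ⟨g, c, rfl⟩
    have hterm : ∀ p ∈ P, ∀ j ∈ indexSet (ν p) (mf p),
        Polynomial.aeval (A.map (algebraMap D K))
          (((algebraMap D K p) ^ j)⁻¹ • (ν p j * c p j).map (algebraMap D K)) =
        (W p j * Polynomial.aeval A (c p j)).map (algebraMap D K) := by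
      intro p hp j _
      have hp0 : algebraMap D K p ≠ 0 := fun h =>
        (hprime p hp).ne_zero (IsFractionRing.injective D K (h.trans (map_zero _).symm))
      rw [map_smul, Stmt18.map_aeval, map_mul, ← hWspec p j, smul_mul_assoc,
        Stmt18.matmap_smul, map_pow, smul_smul, inv_mul_cancel₀ (pow_ne_zero _ hp0),
        one_smul]
    have hcomp : Polynomial.aeval (A.map (algebraMap D K))
        (g.map (algebraMap D K) + ∑ p ∈ P, ∑ j ∈ indexSet (ν p) (mf p),
          ((algebraMap D K p) ^ j)⁻¹ • (ν p j * c p j).map (algebraMap D K)) =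
        (Polynomial.aeval A g + ∑ p ∈ P, ∑ j ∈ indexSet (ν p) (mf p),
          W p j * Polynomial.aeval A (c p j)).map (algebraMap D K) := by
      rw [map_add, Stmt18.map_aeval, map_sum, Stmt18.matmap_add, Stmt18.matmap_sum]
      congr 1
      refine Finset.sum_congr rfl fun p hp => ?_
      rw [map_sum, Stmt18.matmap_sum]
      exact Finset.sum_congr rfl fun j hj => hterm p hp j hj
    exact ⟨_, ⟨_, hcomp⟩, hcomp.symm⟩
end

section
/- Let D be a principal ideal domain with quotient field K and A an n×n matrix over D with minimal polynomial μ_A ∈ D[X]. Then there exists a finite set P_A of prime elements of D such that for every prime element p of D not associated to any element of P_A and every ℓ ≥ 1, one has N_{(p^ℓ)}(A) = μ_A·D[X] + p^ℓ·D[X]. -/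
/-- Let `D` be a PID with quotient field `K` and `A` a matrix over `D`
with minimal polynomial `μ_A ∈ D[X]`. Then there is a finite set `P_A` of prime elements
of `D` such that for every prime `q` of `D` not associated to any element of `P_A` and
every `ℓ ≥ 1`: `N_{(q^ℓ)}(A) = μ_A·D[X] + q^ℓ·D[X]` (stated elementwise). -/
theorem stmt19 {D : Type*} [CommRing D] [IsDomain D] [IsPrincipalIdealRing D]
    (K : Type*) [Field K] [Algebra D K] [IsFractionRing D K]
    {n : ℕ} (A : Matrix (Fin n) (Fin n) D)
    (μ : Polynomial D)
    (hμ : μ.map (algebraMap D K) = minpoly K (A.map (algebraMap D K))) :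
    ∃ P : Finset D, (∀ p ∈ P, Prime p) ∧
      ∀ q : D, Prime q → (∀ p ∈ P, ¬ Associated q p) →
        ∀ ℓ : ℕ, 1 ≤ ℓ →
          ∀ f : Polynomial D, memNullDvd A (q ^ ℓ) f ↔
            ∃ g h : Polynomial D, f = μ * g + Polynomial.C (q ^ ℓ) * h := by
  classical
  set φ := algebraMap D K with hφdef
  have hinj : Function.Injective φ := IsFractionRing.injective D K
  set A' := A.map φ with hA'def
  have hintA' : IsIntegral K A' := Algebra.IsIntegral.isIntegral A'
  have hmonic : μ.Monic := Polynomial.monic_of_injective hinj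
    (by rw [hμ]; exact minpoly.monic hintA')
  set m := μ.natDegree with hm
  set Ψ : Matrix (Fin n) (Fin n) D →ₐ[D] Matrix (Fin n) (Fin n) K :=
    AlgHom.mapMatrix (Algebra.ofId D K) with hΨdef
  have hΨA : Ψ A = A' := by
    ext i j; simp [hΨdef, AlgHom.mapMatrix_apply, Matrix.map_apply, Algebra.ofId_apply, hA'def, hφdef]
  have haevalmap : ∀ p : Polynomial D,
      (Polynomial.aeval A p).map φ = Polynomial.aeval A' (p.map φ) := by
    intro p
    have h1 := Polynomial.aeval_algHom_apply Ψ A p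
    rw [hΨA] at h1
    rw [Polynomial.aeval_map_algebraMap, h1]
    ext i j
    simp [hΨdef, AlgHom.mapMatrix_apply, Matrix.map_apply, Algebra.ofId_apply, hφdef]
  have hμA : Polynomial.aeval A μ = 0 := by
    apply Matrix.map_injective hinj (f := ⇑φ)
    show (Polynomial.aeval A μ).map φ = (0 : Matrix (Fin n) (Fin n) D).map φ
    rw [haevalmap, hμ, minpoly.aeval]
    ext i j; simp [Matrix.map_apply]
  -- the K-linear "evaluation" map
  let Φ : (Fin m → K) →ₗ[K] Matrix (Fin n) (Fin n) K :=
    { toFun := fun c => ∑ i : Fin m, c i • A' ^ (i : ℕ)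
      map_add' := fun x y => by simp [add_smul, Finset.sum_add_distrib]
      map_smul' := fun a x => by simp [smul_smul, Finset.smul_sum] }
  have hΦapply : ∀ c, Φ c = ∑ i : Fin m, c i • A' ^ (i : ℕ) := fun c => rfl
  have hdegμ : μ.degree = (m : ℕ) := Polynomial.degree_eq_natDegree hmonic.ne_zero
  have hdegmin : (minpoly K A').degree = (m : ℕ) := by
    rw [← hμ, hmonic.degree_map, hdegμ]
  have hker : LinearMap.ker Φ = ⊥ := by
    rw [LinearMap.ker_eq_bot']
    intro c hc
    by_contra hc0
    obtain ⟨i0, hi0⟩ : ∃ i, c i ≠ 0 := by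
      by_contra hall
      push_neg at hall
      exact hc0 (funext hall)
    set p : Polynomial K := ∑ i : Fin m, Polynomial.C (c i) * Polynomial.X ^ (i : ℕ) with hp
    have hcoeff : ∀ i : Fin m, p.coeff (i : ℕ) = c i := by
      intro i
      rw [hp, Polynomial.finset_sum_coeff]
      simp only [Polynomial.coeff_C_mul, Polynomial.coeff_X_pow, Fin.val_eq_val]
      simp [Finset.sum_ite_eq']
    have hp0 : p ≠ 0 := fun h => hi0 (by rw [← hcoeff i0, h, Polynomial.coeff_zero])
    have hpA : Polynomial.aeval A' p = 0 := by
      rw [hp, map_sum]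
      rw [show (0 : Matrix (Fin n) (Fin n) K) = Φ c by rw [hc]]
      rw [hΦapply]
      refine Finset.sum_congr rfl fun i _ => ?_
      simp [Algebra.smul_def]
    have hmlt : (minpoly K A').degree ≤ p.degree :=
      minpoly.degree_le_of_ne_zero K A' hp0 hpA
    have hplt : p.degree < (m : ℕ) := by
      rw [hp]
      refine lt_of_le_of_lt (Polynomial.degree_sum_le _ _) ?_
      rw [Finset.sup_lt_iff (by exact_mod_cast WithBot.bot_lt_coe (m : ℕ))]
      intro i _
      refine lt_of_le_of_lt (Polynomial.degree_C_mul_X_pow_le _ _) ?_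
      exact_mod_cast Nat.cast_lt.mpr i.isLt
    rw [hdegmin] at hmlt
    exact absurd (lt_of_le_of_lt hmlt hplt) (lt_irrefl _)
  obtain ⟨ψ, hψ⟩ := LinearMap.exists_leftInverse_of_injective Φ hker
  set s : Finset K := Finset.image
    (fun x : Fin n × Fin n × Fin m => ψ (Matrix.single x.1 x.2.1 (1 : K)) x.2.2)
    Finset.univ with hs
  obtain ⟨d, hd⟩ := IsLocalization.exist_integer_multiples_of_finset (nonZeroDivisors D) s
  -- key integrality fact
  have hint : ∀ B : Matrix (Fin n) (Fin n) D, ∀ i : Fin m,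
      ∃ cB : D, φ cB = φ (d : D) * ψ (B.map φ) i := by
    intro B i
    have hsel : ∀ j k : Fin n, ∃ c : D,
        φ c = φ (d : D) * ψ (Matrix.single j k (1 : K)) i := by
      intro j k
      obtain ⟨c, hc⟩ := hd _ (Finset.mem_image.mpr ⟨(j, k, i), Finset.mem_univ _, rfl⟩)
      exact ⟨c, by rw [hc, Algebra.smul_def]⟩
    choose cc hcc using hsel
    have hBmap : B.map φ = ∑ j : Fin n, ∑ k : Fin n,
        φ (B j k) • Matrix.single j k (1 : K) := by
      conv_lhs => rw [Matrix.matrix_eq_sum_single (B.map φ)]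
      refine Finset.sum_congr rfl fun j _ => Finset.sum_congr rfl fun k _ => ?_
      rw [Matrix.smul_single, smul_eq_mul, mul_one, Matrix.map_apply]
    have hψB : ψ (B.map φ) i = ∑ j : Fin n, ∑ k : Fin n,
        φ (B j k) * ψ (Matrix.single j k (1 : K)) i := by
      rw [hBmap, map_sum, Finset.sum_apply]
      refine Finset.sum_congr rfl fun j _ => ?_
      rw [map_sum, Finset.sum_apply]
      refine Finset.sum_congr rfl fun k _ => ?_
      rw [map_smul, Pi.smul_apply, smul_eq_mul]
    refine ⟨∑ j : Fin n, ∑ k : Fin n, B j k * cc j k, ?_⟩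
    rw [hψB, map_sum, Finset.mul_sum]
    refine Finset.sum_congr rfl fun j _ => ?_
    rw [map_sum, Finset.mul_sum]
    refine Finset.sum_congr rfl fun k _ => ?_
    rw [map_mul, hcc]
    ring
  refine ⟨(UniqueFactorizationMonoid.factors (d : D)).toFinset,
    fun p hp => UniqueFactorizationMonoid.prime_of_factor p (Multiset.mem_toFinset.mp hp), ?_⟩
  intro q hq hqP ℓ hℓ f
  have hd0 : (d : D) ≠ 0 := nonZeroDivisors.coe_ne_zero d
  have hqd : ¬ q ∣ (d : D) := by
    intro hdvd
    obtain ⟨p, hpmem, hass⟩ :=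
      UniqueFactorizationMonoid.exists_mem_factors_of_dvd hd0 hq.irreducible hdvd
    exact hqP p (Multiset.mem_toFinset.mpr hpmem) hass
  constructor
  · rintro ⟨B, hB⟩
    set r := f %ₘ μ with hr
    have hfr : f = μ * (f /ₘ μ) + r := by
      conv_lhs => rw [← Polynomial.modByMonic_add_div f μ]
      ring
    have hAr : Polynomial.aeval A r = (q ^ ℓ) • B := by
      have h2 : Polynomial.aeval A f = Polynomial.aeval A r := by
        conv_lhs => rw [hfr]
        rw [map_add, map_mul, hμA, zero_mul, zero_add]
      rw [← h2, hB]
    suffices hdvdr : Polynomial.C (q ^ ℓ) ∣ r by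
      obtain ⟨h, hh⟩ := hdvdr
      exact ⟨f /ₘ μ, h, by conv_lhs => rw [hfr, hh]⟩
    rw [Polynomial.C_dvd_iff_dvd_coeff]
    intro i
    by_cases hr0 : r = 0
    · simp [hr0]
    have hdegr : r.natDegree < m :=
      Polynomial.natDegree_lt_natDegree hr0 (Polynomial.degree_modByMonic_lt f hmonic)
    by_cases him : i < m
    · -- main computation
      set c : Fin m → K := fun j => φ (r.coeff (j : ℕ)) with hcdef
      have hΦc : Φ c = (Polynomial.aeval A r).map φ := by
        rw [haevalmap]
        rw [Polynomial.aeval_eq_sum_range' (n := m)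
          (lt_of_le_of_lt Polynomial.natDegree_map_le hdegr)]
        rw [Finset.sum_range fun j => (r.map φ).coeff j • A' ^ j]
        rw [hΦapply]
        refine Finset.sum_congr rfl fun j _ => ?_
        rw [Polynomial.coeff_map]
      have hΦc2 : Φ c = φ (q ^ ℓ) • (B.map φ) := by
        rw [hΦc, hAr]
        ext j k
        simp [Matrix.map_apply, Matrix.smul_apply, smul_eq_mul, map_mul]
      have hceq : c = φ (q ^ ℓ) • ψ (B.map φ) := by
        have h3 : ψ (Φ c) = c := LinearMap.ext_iff.mp hψ c
        rw [← h3, hΦc2, map_smul]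
      obtain ⟨cB, hcB⟩ := hint B ⟨i, him⟩
      have hKeq : φ ((d : D) * r.coeff i) = φ (q ^ ℓ * cB) := by
        rw [map_mul, map_mul]
        have hci : φ (r.coeff i) = φ (q ^ ℓ) * ψ (B.map φ) ⟨i, him⟩ := by
          have := congrFun hceq ⟨i, him⟩
          rw [Pi.smul_apply, smul_eq_mul] at this
          exact this
        rw [hci, hcB]
        ring
      have hDeq : (d : D) * r.coeff i = q ^ ℓ * cB := hinj hKeq
      exact Prime.pow_dvd_of_dvd_mul_left hq ℓ hqd ⟨cB, hDeq⟩
    · exact (Polynomial.coeff_eq_zero_of_natDegree_lt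
        (hdegr.trans_le (not_lt.mp him))) ▸ dvd_zero _
  · rintro ⟨g, h, rfl⟩
    refine ⟨Polynomial.aeval A h, ?_⟩
    rw [map_add, map_mul, hμA, zero_mul, zero_add, map_mul, Polynomial.aeval_C]
    exact (Algebra.smul_def _ _).symm
end
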